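/- arXiv:1111.2966 — 9 statements merged into one kernel-verified Lean document; each statement's English description precedes it below -/
import Mathlib

section
/- If a permutation u of {1,...,n} is written as u = (n,...,p_n) ∘ ... ∘ (2,...,p_2) ∘ (1,...,p_1) with i ≤ p_i ≤ n, then for every k, p_k = k + |{ ℓ > k : u^{-1}(ℓ) < u^{-1}(k) }|. -/
/-- The ascending cycle `(i, i+1, ..., p)`: it sends `i ↦ i+1 ↦ ... ↦ p ↦ i`
and fixes every other element.  (When `p ≤ i` it is the identity.) -/
def ascCycle {n : ℕ} (i p : Fin n) : Equiv.Perm (Fin n) :=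
  ((List.range n).filterMap fun j =>
    if h : (i : ℕ) ≤ j ∧ j + 1 ≤ (p : ℕ) then
      some (Equiv.swap (⟨j, by have := p.isLt; omega⟩ : Fin n)
        (⟨j + 1, by have := p.isLt; omega⟩ : Fin n))
    else none).prod

/-- The product `(n, ..., p n) ∘ ... ∘ (2, ..., p 2) ∘ (1, ..., p 1)`
(composition applied right to left, so the cycle at index `1` acts first). -/
def ascFactorization {n : ℕ} (p : Fin n → Fin n) : Equiv.Perm (Fin n) :=
  ((List.ofFn fun i : Fin n => ascCycle i (p i)).reverse).prod

namespace Stmt2Aux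
variable {n : ℕ}

lemma list_prod_fix (l : List (Equiv.Perm (Fin n))) (x : Fin n)
    (h : ∀ g ∈ l, g x = x) : l.prod x = x := by
  induction l with
  | nil => rfl
  | cons a l ih =>
    have h1 : a x = x := h a List.mem_cons_self
    have h2 : l.prod x = x := ih fun g hg => h g (List.mem_cons_of_mem a hg)
    simp [List.prod_cons, Equiv.Perm.mul_apply, h2, h1]

def swEntry (i : Fin n) (b : ℕ) (hb : b < n) : ℕ → Option (Equiv.Perm (Fin n)) := fun j =>
  if h : (i : ℕ) ≤ j ∧ j + 1 ≤ b then
    some (Equiv.swap (⟨j, by omega⟩ : Fin n) (⟨j + 1, by omega⟩ : Fin n))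
  else none

lemma swEntry_none (i : Fin n) (b : ℕ) (hb : b < n) (j : ℕ) (h : b ≤ j ∨ j < i) :
    swEntry i b hb j = none := by
  unfold swEntry; rw [dif_neg]; omega

lemma filterMap_range_trunc {β : Type*} (f : ℕ → Option β) (m : ℕ) (hm : m ≤ n)
    (h : ∀ j, m ≤ j → f j = none) :
    (List.range n).filterMap f = (List.range m).filterMap f := by
  obtain ⟨t, rfl⟩ := Nat.exists_eq_add_of_le hm
  rw [List.range_add, List.filterMap_append]
  have : (List.map (fun x => m + x) (List.range t)).filterMap f = [] := by
    rw [List.filterMap_eq_nil_iff]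
    intro a ha
    simp only [List.mem_map, List.mem_range] at ha
    obtain ⟨b, _, rfl⟩ := ha
    exact h _ (Nat.le_add_right m b)
  rw [this, List.append_nil]

lemma ascCycle_eq (i p : Fin n) :
    ascCycle i p = ((List.range (p : ℕ)).filterMap (swEntry i p p.isLt)).prod := by
  unfold ascCycle
  rw [← filterMap_range_trunc (swEntry i p p.isLt) p p.isLt.le
    (fun j hj => swEntry_none _ _ _ _ (Or.inl hj))]
  rfl

lemma prodSw_succ (i : Fin n) (q : ℕ) (hq : q + 1 < n) (hiq : (i : ℕ) ≤ q) :
    ((List.range (q+1)).filterMap (swEntry i (q+1) hq)).prod =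
      ((List.range q).filterMap (swEntry i q (by omega))).prod *
        Equiv.swap (⟨q, by omega⟩ : Fin n) (⟨q+1, hq⟩ : Fin n) := by
  rw [List.range_succ, List.filterMap_append]
  have h1 : (List.range q).filterMap (swEntry i (q+1) hq)
      = (List.range q).filterMap (swEntry i q (by omega)) := by
    apply List.filterMap_congr
    intro x hx
    simp only [List.mem_range] at hx
    unfold swEntry
    by_cases hc : (i : ℕ) ≤ x
    · rw [dif_pos ⟨hc, by omega⟩, dif_pos ⟨hc, by omega⟩]
    · rw [dif_neg (by omega), dif_neg (by omega)]
  have h2 : ([q].filterMap (swEntry i (q+1) hq))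
      = [Equiv.swap (⟨q, by omega⟩ : Fin n) (⟨q+1, hq⟩ : Fin n)] := by
    have hsw : swEntry i (q+1) hq q
        = some (Equiv.swap (⟨q, by omega⟩ : Fin n) (⟨q+1, hq⟩ : Fin n)) := by
      unfold swEntry
      rw [dif_pos ⟨hiq, le_refl _⟩]
    simp [List.filterMap_cons, hsw]
  rw [h1, h2, List.prod_append, List.prod_singleton]

lemma prodSw_apply : ∀ (b : ℕ) (hb : b < n) (i : Fin n), (i : ℕ) ≤ b →
    ∀ x : Fin n, ((((List.range b).filterMap (swEntry i b hb)).prod x : ℕ)) =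
      if (x : ℕ) < i ∨ b < (x : ℕ) then (x : ℕ)
      else if (x : ℕ) = b then (i : ℕ) else (x : ℕ) + 1 := by
  intro b
  induction b with
  | zero =>
    intro hb i hi x
    simp only [List.range_zero, List.filterMap_nil, List.prod_nil, Equiv.Perm.one_apply]
    split_ifs <;> omega
  | succ q ih =>
    intro hb i hi x
    by_cases hiq : (i : ℕ) ≤ q
    · rw [prodSw_succ i q hb hiq, Equiv.Perm.mul_apply]
      by_cases hx1 : (x : ℕ) = q
      · have hx : x = (⟨q, by omega⟩ : Fin n) := Fin.ext hx1
        rw [hx, Equiv.swap_apply_left, ih (by omega) i hiq ⟨q+1, hb⟩]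
        simp only [Fin.val_mk]
        split_ifs <;> omega
      · by_cases hx2 : (x : ℕ) = q + 1
        · have hx : x = (⟨q+1, hb⟩ : Fin n) := Fin.ext hx2
          rw [hx, Equiv.swap_apply_right, ih (by omega) i hiq ⟨q, by omega⟩]
          simp only [Fin.val_mk]
          split_ifs <;> omega
        · rw [Equiv.swap_apply_of_ne_of_ne
            (fun h => hx1 (by rw [h])) (fun h => hx2 (by rw [h])),
            ih (by omega) i hiq x]
          split_ifs <;> omega
    · have hnil : (List.range (q+1)).filterMap (swEntry i (q+1) hb) = [] := by
        rw [List.filterMap_eq_nil_iff]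
        intro a ha
        unfold swEntry
        rw [dif_neg]
        simp only [List.mem_range] at ha
        omega
      rw [hnil]
      simp only [List.prod_nil, Equiv.Perm.one_apply]
      split_ifs <;> omega

lemma ascCycle_apply (i p : Fin n) (h : (i : ℕ) ≤ p) (x : Fin n) :
    ((ascCycle i p x : ℕ)) =
      if (x : ℕ) < i ∨ (p : ℕ) < (x : ℕ) then (x : ℕ)
      else if (x : ℕ) = p then (i : ℕ) else (x : ℕ) + 1 := by
  rw [ascCycle_eq]
  exact prodSw_apply (p : ℕ) p.isLt i h x

lemma ascCycle_symm_apply (i p : Fin n) (h : (i : ℕ) ≤ p) (y : Fin n) :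
    (((ascCycle i p).symm y : ℕ)) =
      if (y : ℕ) < i ∨ (p : ℕ) < (y : ℕ) then (y : ℕ)
      else if (y : ℕ) = i then (p : ℕ) else (y : ℕ) - 1 := by
  have hz := ascCycle_apply i p h ((ascCycle i p).symm y)
  rw [Equiv.apply_symm_apply] at hz
  have h1 := p.isLt
  have h2 := y.isLt
  have h3 := ((ascCycle i p).symm y).isLt
  split_ifs at hz ⊢ <;> omega

lemma ascCycle_apply_of_lt (i p x : Fin n) (h : (x : ℕ) < i) :
    ascCycle i p x = x := by
  unfold ascCycle
  apply list_prod_fix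
  intro g hg
  rw [List.mem_filterMap] at hg
  obtain ⟨a, _, ha⟩ := hg
  by_cases hc : (i : ℕ) ≤ a ∧ a + 1 ≤ (p : ℕ)
  · rw [dif_pos hc] at ha
    obtain rfl := Option.some_injective _ ha
    apply Equiv.swap_apply_of_ne_of_ne <;>
      · intro hx
        apply_fun (Fin.val) at hx
        simp only [Fin.val_mk] at hx
        omega
  · rw [dif_neg hc] at ha
    exact absurd ha (by simp)

lemma ascCycle_symm_ge (i p : Fin n) (h : (i : ℕ) ≤ p) (y : Fin n) (hy : (i : ℕ) < y) :
    (i : ℕ) ≤ ((ascCycle i p).symm y : ℕ) := by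
  rw [ascCycle_symm_apply _ _ h]
  split_ifs <;> omega

lemma ascCycle_symm_strictMono (i p : Fin n) (h : (i : ℕ) ≤ p) (y z : Fin n)
    (hy : (i : ℕ) < y) (hyz : (y : ℕ) < z) :
    (((ascCycle i p).symm y : ℕ)) < ((ascCycle i p).symm z : ℕ) := by
  rw [ascCycle_symm_apply _ _ h, ascCycle_symm_apply _ _ h]
  have := p.isLt
  split_ifs <;> omega

end Stmt2Aux

open Stmt2Aux in
/-- If `u = (n,...,p_n) ∘ ... ∘ (1,...,p_1)` with `i ≤ p_i ≤ n`, then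
`p_k = k + |{ ℓ > k : u⁻¹(ℓ) < u⁻¹(k) }|` for every `k`. -/
theorem stmt2 (n : ℕ) (u : Equiv.Perm (Fin n)) (p : Fin n → Fin n)
    (hp : ∀ i, i ≤ p i) (hu : u = ascFactorization p) (k : Fin n) :
    (p k : ℕ) =
      (k : ℕ) + (Finset.univ.filter fun ℓ : Fin n => k < ℓ ∧ u.symm ℓ < u.symm k).card := by
  subst hu
  have hp' : ∀ i : Fin n, (i : ℕ) ≤ (p i : ℕ) := fun i => hp i
  set c : Fin n → Equiv.Perm (Fin n) := fun j => ascCycle j (p j) with hc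
  set L : List (Equiv.Perm (Fin n)) := List.ofFn c with hLdef
  have hlen : L.length = n := by simp [hLdef]
  have hkn := k.isLt
  have hgetL : ∀ (m : ℕ) (hm : m < n), L[m]'(by omega) = c ⟨m, hm⟩ := by
    intro m hm
    simp [hLdef, List.getElem_ofFn]
  set V : Equiv.Perm (Fin n) := (L.take (k : ℕ)).reverse.prod with hV
  set T : Equiv.Perm (Fin n) := (L.drop ((k : ℕ) + 1)).reverse.prod with hT
  -- decomposition
  have hdec : ascFactorization p = T * (c k * V) := by
    have hdrop : L.drop (k : ℕ) = c k :: L.drop ((k : ℕ) + 1) := by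
      rw [List.drop_eq_getElem_cons (by omega), hgetL (k : ℕ) hkn, Fin.eta]
    have hsplit : L = L.take (k : ℕ) ++ (c k :: L.drop ((k : ℕ) + 1)) := by
      rw [← hdrop, List.take_append_drop]
    show L.reverse.prod = _
    conv_lhs => rw [hsplit]
    rw [List.reverse_append, List.reverse_cons, List.prod_append, List.prod_append,
      List.prod_singleton, mul_assoc]
  have hsymm : ∀ x : Fin n, (ascFactorization p).symm x = V.symm ((c k).symm (T.symm x)) := by
    intro x
    rw [hdec]
    simp [Equiv.Perm.mul_def, Equiv.symm_trans_apply]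
  -- T fixes everything ≤ k
  have hTfix : ∀ x : Fin n, (x : ℕ) ≤ k → T x = x := by
    intro x hx
    apply list_prod_fix
    intro g hg
    rw [List.mem_reverse] at hg
    obtain ⟨t, ht, hgt⟩ := List.mem_iff_getElem.mp hg
    rw [List.getElem_drop] at hgt
    rw [hgetL ((k : ℕ) + 1 + t) (by have := ht; simp [hlen] at this ⊢; omega)] at hgt
    rw [← hgt]
    exact ascCycle_apply_of_lt _ _ _ (by simp; omega)
  have hTsfix : ∀ x : Fin n, (x : ℕ) ≤ k → T.symm x = x := by
    intro x hx
    rw [Equiv.symm_apply_eq, hTfix x hx]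
  have hTsgt : ∀ x : Fin n, (k : ℕ) < x → (k : ℕ) < T.symm x := by
    intro x hx
    by_contra hle
    push_neg at hle
    have := hTfix (T.symm x) hle
    rw [Equiv.apply_symm_apply] at this
    rw [← this] at hle
    omega
  -- monotonicity of V.symm above k
  have hVmono : ∀ (m : ℕ), m ≤ n → ∀ y z : Fin n,
      m ≤ (y : ℕ) → (y : ℕ) < (z : ℕ) →
      ((((L.take m).reverse.prod).symm y : ℕ)) < (((L.take m).reverse.prod).symm z : ℕ) := by
    intro m
    induction m with
    | zero =>
      intro _ y z _ hyz
      simpa [Equiv.Perm.one_symm] using hyz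
    | succ q ih =>
      intro hm y z hy hyz
      have hq : q < n := by omega
      have htake : L.take (q + 1) = L.take q ++ [c ⟨q, hq⟩] := by
        rw [List.take_succ, List.getElem?_eq_getElem (by omega), hgetL q hq]
        rfl
      rw [htake, List.reverse_append, List.reverse_singleton, List.singleton_append,
        List.prod_cons]
      simp only [Equiv.Perm.mul_def, Equiv.symm_trans_apply]
      set i : Fin n := ⟨q, hq⟩ with hi
      have hip : (i : ℕ) ≤ (p i : ℕ) := hp' i
      have hy' : (i : ℕ) < (y : ℕ) := by simp [hi]; omega
      have hz' : (i : ℕ) < (z : ℕ) := by simp [hi]; omega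
      apply ih (by omega)
      · have := ascCycle_symm_ge i (p i) hip y hy'
        simpa [hi] using this
      · exact ascCycle_symm_strictMono i (p i) hip y z hy' hyz
  have hkp := hp' k
  have hVmonoK : ∀ y z : Fin n, (k : ℕ) ≤ (y : ℕ) → (y : ℕ) < (z : ℕ) →
      ((V.symm y : ℕ)) < (V.symm z : ℕ) := fun y z hy hz =>
    hVmono (k : ℕ) (by omega) y z hy hz
  have hVmono_iff : ∀ a b : Fin n, (k : ℕ) ≤ a → (k : ℕ) ≤ b →
      ((V.symm a : ℕ) < (V.symm b : ℕ) ↔ (a : ℕ) < (b : ℕ)) := by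
    intro a b ha hb
    constructor
    · intro hlt
      by_contra hge
      push_neg at hge
      rcases Nat.lt_or_ge (b : ℕ) (a : ℕ) with hba | hba
      · exact absurd (hVmonoK b a hb hba) (by omega)
      · have : a = b := Fin.ext (by omega)
        rw [this] at hlt
        omega
    · exact hVmonoK a b ha
  -- value of u.symm at k
  have hck_symm_k : (c k).symm k = p k := by
    apply Fin.ext
    rw [ascCycle_symm_apply k (p k) hkp]
    split_ifs <;> omega
  have husk : (ascFactorization p).symm k = V.symm (p k) := by
    rw [hsymm k, hTsfix k (le_refl _), hck_symm_k]
  -- the condition rewritten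
  have hcond : ∀ ℓ : Fin n, (k < ℓ ∧ (ascFactorization p).symm ℓ < (ascFactorization p).symm k)
      ↔ ((k : ℕ) < (T.symm ℓ : ℕ) ∧ (T.symm ℓ : ℕ) ≤ (p k : ℕ)) := by
    intro ℓ
    have hckm : (((c k).symm (T.symm ℓ) : ℕ)) =
        if ((T.symm ℓ : ℕ)) < k ∨ (p k : ℕ) < ((T.symm ℓ : ℕ)) then ((T.symm ℓ : ℕ))
        else if ((T.symm ℓ : ℕ)) = k then (p k : ℕ) else ((T.symm ℓ : ℕ)) - 1 :=
      ascCycle_symm_apply k (p k) hkp (T.symm ℓ)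
    have hTl := (T.symm ℓ).isLt
    have hpk := (p k).isLt
    constructor
    · rintro ⟨h1, h2⟩
      have hm : (k : ℕ) < (T.symm ℓ : ℕ) := hTsgt ℓ h1
      rw [hsymm ℓ, husk] at h2
      have hge : (k : ℕ) ≤ ((c k).symm (T.symm ℓ) : ℕ) :=
        ascCycle_symm_ge k (p k) hkp (T.symm ℓ) hm
      have := (hVmono_iff _ _ hge hkp).mp (Fin.lt_def.mp h2)
      refine ⟨hm, ?_⟩
      split_ifs at hckm <;> omega
    · rintro ⟨h1, h2⟩
      have hkl : k < ℓ := by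
        by_contra hle
        push_neg at hle
        have := hTsfix ℓ (Fin.le_def.mp hle)
        rw [this] at h1
        exact absurd h1 (by have := Fin.le_def.mp hle; omega)
      refine ⟨hkl, ?_⟩
      rw [hsymm ℓ, husk, Fin.lt_def]
      have hge : (k : ℕ) ≤ ((c k).symm (T.symm ℓ) : ℕ) :=
        ascCycle_symm_ge k (p k) hkp (T.symm ℓ) h1
      rw [hVmono_iff _ _ hge hkp]
      split_ifs at hckm <;> omega
  -- rewrite the filter
  have hfilter : (Finset.univ.filter fun ℓ : Fin n =>
        k < ℓ ∧ (ascFactorization p).symm ℓ < (ascFactorization p).symm k)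
      = Finset.univ.filter fun ℓ : Fin n =>
        (k : ℕ) < (T.symm ℓ : ℕ) ∧ (T.symm ℓ : ℕ) ≤ (p k : ℕ) := by
    apply Finset.filter_congr
    intro ℓ _
    exact iff_iff_eq.mp (hcond ℓ) ▸ Iff.rfl
  rw [hfilter]
  have hcard : (Finset.univ.filter fun ℓ : Fin n =>
        (k : ℕ) < (T.symm ℓ : ℕ) ∧ (T.symm ℓ : ℕ) ≤ (p k : ℕ)).card
      = (Finset.univ.filter fun m : Fin n =>
        (k : ℕ) < (m : ℕ) ∧ (m : ℕ) ≤ (p k : ℕ)).card := by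
    apply Finset.card_bij' (fun ℓ _ => T.symm ℓ) (fun m _ => T m)
    · intro a ha
      simp only [Finset.mem_filter, Finset.mem_univ, true_and] at ha ⊢
      exact ha
    · intro a ha
      simp only [Finset.mem_filter, Finset.mem_univ, true_and] at ha ⊢
      rw [Equiv.symm_apply_apply]
      exact ha
    · intro a _
      rw [Equiv.apply_symm_apply]
    · intro a _
      rw [Equiv.symm_apply_apply]
  rw [hcard]
  have hIoc : (Finset.univ.filter fun m : Fin n =>
        (k : ℕ) < (m : ℕ) ∧ (m : ℕ) ≤ (p k : ℕ)) = Finset.Ioc k (p k) := by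
    ext m
    simp only [Finset.mem_filter, Finset.mem_univ, true_and, Finset.mem_Ioc,
      Fin.lt_def, Fin.le_def]
  rw [hIoc, Fin.card_Ioc]
  omega
end

section
/- If a permutation v of {1,...,n} is written as v = (1,...,q_1) ∘ ... ∘ (n-1,...,q_{n-1}) ∘ (n,...,q_n) with 1 ≤ q_i ≤ i (where (i,...,q_i) is the descending cycle i↦i-1↦...↦q_i↦i), then for every k, q_k = k − |{ ℓ < k : v^{-1}(ℓ) > v^{-1}(k) }|. -/
/-- The descending cycle `(i, i-1, ..., q)`: it sends `i ↦ i-1 ↦ ... ↦ q ↦ i`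
and fixes every other element.  (When `i ≤ q` it is the identity.) -/
def descCycle {n : ℕ} (i q : Fin n) : Equiv.Perm (Fin n) :=
  (((List.range n).reverse).filterMap fun j =>
    if h : (q : ℕ) + 1 ≤ j ∧ j ≤ (i : ℕ) then
      some (Equiv.swap (⟨j, by have := i.isLt; omega⟩ : Fin n)
        (⟨j - 1, by have := i.isLt; omega⟩ : Fin n))
    else none).prod

/-- The product `(1, ..., q 1) ∘ (2, ..., q 2) ∘ ... ∘ (n, ..., q n)`
(composition applied right to left, so the cycle at index `n` acts first). -/
def descFactorization {n : ℕ} (q : Fin n → Fin n) : Equiv.Perm (Fin n) :=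
  (List.ofFn fun i : Fin n => descCycle i (q i)).prod


section Aux
variable {n : ℕ}

lemma swap_val (a b : ℕ) (ha : a < n) (hb : b < n) (z : Fin n) :
    ((Equiv.swap (⟨a, ha⟩ : Fin n) (⟨b, hb⟩ : Fin n)) z : ℕ) =
      if (z : ℕ) = a then b else if (z : ℕ) = b then a else (z : ℕ) := by
  rw [Equiv.swap_apply_def]
  split_ifs <;> simp_all [Fin.ext_iff]

lemma descCycle_take_apply (i q : Fin n) :
    ∀ m, ∀ x : Fin n,
    (((((List.range m).reverse).filterMap fun j =>
      if h : (q : ℕ) + 1 ≤ j ∧ j ≤ (i : ℕ) then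
        some (Equiv.swap (⟨j, by have := i.isLt; omega⟩ : Fin n)
          (⟨j - 1, by have := i.isLt; omega⟩ : Fin n))
      else none).prod) x : ℕ) =
      if (x : ℕ) = (q : ℕ) then max (q:ℕ) (min (i:ℕ) (m-1))
      else if (q:ℕ) < (x:ℕ) ∧ (x:ℕ) ≤ max (q:ℕ) (min (i:ℕ) (m-1)) then (x:ℕ) - 1
      else (x:ℕ) := by
  intro m
  induction m with
  | zero =>
    intro x
    simp only [List.range_zero, List.reverse_nil, List.filterMap_nil, List.prod_nil,
      Equiv.Perm.coe_one, id_eq]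
    split_ifs <;> omega
  | succ m ih =>
    intro x
    rw [List.range_succ, List.reverse_append, List.reverse_singleton]
    simp only [List.singleton_append, List.filterMap_cons]
    by_cases hc : (q : ℕ) + 1 ≤ m ∧ m ≤ (i : ℕ)
    · rw [dif_pos hc]
      rw [List.prod_cons, Equiv.Perm.mul_apply]
      have hy := ih x
      set y := ((((List.range m).reverse).filterMap fun j =>
        if h : (q : ℕ) + 1 ≤ j ∧ j ≤ (i : ℕ) then
          some (Equiv.swap (⟨j, by have := i.isLt; omega⟩ : Fin n)
            (⟨j - 1, by have := i.isLt; omega⟩ : Fin n))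
        else none).prod) x
      clear_value y
      rw [swap_val]
      split_ifs at hy ⊢ <;> omega
    · rw [dif_neg hc]
      rw [ih x]
      have h1 : max (q:ℕ) (min (i:ℕ) (m-1)) = max (q:ℕ) (min (i:ℕ) (m+1-1)) := by omega
      rw [h1]

lemma descCycle_apply (i q : Fin n) (x : Fin n) :
    ((descCycle i q) x : ℕ) =
      if (x : ℕ) = (q : ℕ) then max (q:ℕ) (i:ℕ)
      else if (q:ℕ) < (x:ℕ) ∧ (x:ℕ) ≤ max (q:ℕ) (i:ℕ) then (x:ℕ) - 1
      else (x:ℕ) := by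
  have h := descCycle_take_apply i q n x
  have e : min (i:ℕ) (n-1) = (i:ℕ) := by have := i.isLt; omega
  rw [e] at h
  exact h

lemma descCycle_symm_val (i q : Fin n) (hq : (q:ℕ) ≤ (i:ℕ)) (y : Fin n) :
    (((descCycle i q)⁻¹ y) : ℕ) =
      if (y : ℕ) = (i : ℕ) then (q : ℕ)
      else if (q:ℕ) ≤ (y:ℕ) ∧ (y:ℕ) < (i:ℕ) then (y:ℕ) + 1
      else (y:ℕ) := by
  have hz : ((descCycle i q) ((descCycle i q)⁻¹ y) : ℕ) = (y : ℕ) := by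
    rw [Equiv.Perm.inv_def, Equiv.apply_symm_apply]
  rw [descCycle_apply] at hz
  set z := (descCycle i q)⁻¹ y
  clear_value z
  have hzlt := z.isLt
  have hilt := i.isLt
  split_ifs at hz ⊢ <;> omega

end Aux

section Main
variable {n : ℕ}

/-- prefix products of the descending cycles -/
def Pp (q : Fin n → Fin n) (m : ℕ) : Equiv.Perm (Fin n) :=
  ((List.ofFn fun i : Fin n => descCycle i (q i)).take m).prod

lemma Pp_succ (q : Fin n → Fin n) (m : ℕ) (hm : m < n) :
    Pp q (m+1) = Pp q m * descCycle ⟨m, hm⟩ (q ⟨m, hm⟩) := by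
  unfold Pp
  rw [List.take_succ]
  have h : (List.ofFn fun i : Fin n => descCycle i (q i))[m]? =
      some (descCycle ⟨m, hm⟩ (q ⟨m, hm⟩)) := by
    simp [List.getElem?_ofFn, hm]
  rw [h]
  simp

lemma Pp_fix (q : Fin n → Fin n) (hq : ∀ i, q i ≤ i) :
    ∀ m, ∀ j : Fin n, m ≤ (j : ℕ) → Pp q m j = j := by
  intro m
  induction m with
  | zero => intro j _; simp [Pp]
  | succ m ih =>
    intro j hj
    have hmn : m < n := lt_of_lt_of_le (Nat.lt_succ_self m) (le_trans hj (Nat.le_of_lt_succ (Nat.lt_succ_of_lt j.isLt)))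
    rw [Pp_succ q m hmn, Equiv.Perm.mul_apply]
    have hqm : (q ⟨m, hmn⟩ : ℕ) ≤ m := hq ⟨m, hmn⟩
    have hc : descCycle ⟨m, hmn⟩ (q ⟨m, hmn⟩) j = j := by
      apply Fin.ext
      rw [descCycle_apply]
      have hval : ((⟨m, hmn⟩ : Fin n) : ℕ) = m := rfl
      rw [hval]
      split_ifs <;> omega
    rw [hc]
    exact ih j (by omega)
end Main

section Main2
variable {n : ℕ}

lemma Pp_symm_fix (q : Fin n → Fin n) (hq : ∀ i, q i ≤ i) (m : ℕ) (j : Fin n)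
    (hj : m ≤ (j : ℕ)) : (Pp q m)⁻¹ j = j := by
  rw [Equiv.Perm.inv_eq_iff_eq]
  exact (Pp_fix q hq m j hj).symm

lemma Pp_lt (q : Fin n → Fin n) (hq : ∀ i, q i ≤ i) (m : ℕ) (j : Fin n)
    (hj : (j : ℕ) < m) : ((Pp q m) j : ℕ) < m := by
  by_contra h
  push_neg at h
  have h2 := Pp_symm_fix q hq m (Pp q m j) h
  rw [Equiv.Perm.inv_def, Equiv.symm_apply_apply] at h2
  have h3 : (j : ℕ) = ((Pp q m) j : ℕ) := congrArg Fin.val h2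
  omega

lemma Pp_symm_lt (q : Fin n → Fin n) (hq : ∀ i, q i ≤ i) (m : ℕ) (j : Fin n)
    (hj : (j : ℕ) < m) : (((Pp q m)⁻¹ j) : ℕ) < m := by
  by_contra h
  push_neg at h
  have h2 := Pp_fix q hq m ((Pp q m)⁻¹ j) h
  rw [Equiv.Perm.inv_def, Equiv.apply_symm_apply] at h2
  have h3 : (((Pp q m)⁻¹ j) : ℕ) = (j : ℕ) := congrArg Fin.val h2.symm
  omega

lemma main_lemma (q : Fin n → Fin n) (hq : ∀ i, q i ≤ i) :
    ∀ m, m ≤ n → ∀ k : Fin n, (k : ℕ) < m →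
    (q k : ℕ) = (k : ℕ) -
      (Finset.univ.filter fun ℓ : Fin n => ℓ < k ∧ (Pp q m)⁻¹ k < (Pp q m)⁻¹ ℓ).card := by
  intro m
  induction m with
  | zero => intro _ _ hk; omega
  | succ m ih =>
    intro hm k hk
    have hmn : m < n := lt_of_lt_of_le (Nat.lt_succ_self m) hm
    have hqm : (q ⟨m, hmn⟩ : ℕ) ≤ m := hq ⟨m, hmn⟩
    have hPs : ∀ z : Fin n, (Pp q (m+1))⁻¹ z =
        (descCycle ⟨m, hmn⟩ (q ⟨m, hmn⟩))⁻¹ ((Pp q m)⁻¹ z) := by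
      intro z
      rw [Pp_succ q m hmn, mul_inv_rev, Equiv.Perm.mul_apply]
    have hval : ((⟨m, hmn⟩ : Fin n) : ℕ) = m := rfl
    rcases Nat.lt_or_ge (k : ℕ) m with hk' | hk'
    · -- k < m : reduce to the induction hypothesis
      have hfe : (Finset.univ.filter fun ℓ : Fin n =>
            ℓ < k ∧ (Pp q (m+1))⁻¹ k < (Pp q (m+1))⁻¹ ℓ) =
          (Finset.univ.filter fun ℓ : Fin n =>
            ℓ < k ∧ (Pp q m)⁻¹ k < (Pp q m)⁻¹ ℓ) := by
        apply Finset.filter_congr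
        intro ℓ _
        constructor
        · rintro ⟨h1, h2⟩
          refine ⟨h1, ?_⟩
          rw [hPs, hPs] at h2
          have ha : (((Pp q m)⁻¹ k) : ℕ) < m := Pp_symm_lt q hq m k hk'
          have hb : (((Pp q m)⁻¹ ℓ) : ℕ) < m :=
            Pp_symm_lt q hq m ℓ (lt_trans (Fin.lt_def.mp h1) hk')
          rw [Fin.lt_def] at h2 ⊢
          rw [descCycle_symm_val _ _ (by rw [hval]; exact hqm),
            descCycle_symm_val _ _ (by rw [hval]; exact hqm)] at h2
          rw [hval] at h2
          split_ifs at h2 <;> omega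
        · rintro ⟨h1, h2⟩
          refine ⟨h1, ?_⟩
          rw [hPs, hPs]
          have ha : (((Pp q m)⁻¹ k) : ℕ) < m := Pp_symm_lt q hq m k hk'
          have hb : (((Pp q m)⁻¹ ℓ) : ℕ) < m :=
            Pp_symm_lt q hq m ℓ (lt_trans (Fin.lt_def.mp h1) hk')
          rw [Fin.lt_def] at h2 ⊢
          rw [descCycle_symm_val _ _ (by rw [hval]; exact hqm),
            descCycle_symm_val _ _ (by rw [hval]; exact hqm)]
          rw [hval]
          split_ifs <;> omega
      rw [hfe]
      exact ih (le_of_lt (Nat.lt_of_lt_of_le (Nat.lt_succ_self m) hm)) k hk'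
    · -- k = m
      have hkm : (k : ℕ) = m := by omega
      have hkeq : k = ⟨m, hmn⟩ := Fin.ext hkm
      -- (Pp q (m+1))⁻¹ k has value q ⟨m⟩
      have hPk : (((Pp q (m+1))⁻¹ k) : ℕ) = (q ⟨m, hmn⟩ : ℕ) := by
        rw [hPs, Pp_symm_fix q hq m k (by omega),
          descCycle_symm_val _ _ (by rw [hval]; exact hqm)]
        rw [hval, hkm]
        simp
      -- rewrite the filter
      have hfe : (Finset.univ.filter fun ℓ : Fin n =>
            ℓ < k ∧ (Pp q (m+1))⁻¹ k < (Pp q (m+1))⁻¹ ℓ) =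
          (Finset.univ.filter fun ℓ : Fin n =>
            ℓ < k ∧ (q ⟨m, hmn⟩ : ℕ) ≤ (((Pp q m)⁻¹ ℓ) : ℕ)) := by
        apply Finset.filter_congr
        intro ℓ _
        constructor
        · rintro ⟨h1, h2⟩
          refine ⟨h1, ?_⟩
          rw [Fin.lt_def, hPk, hPs] at h2
          have hb : (((Pp q m)⁻¹ ℓ) : ℕ) < m :=
            Pp_symm_lt q hq m ℓ (by have := Fin.lt_def.mp h1; omega)
          rw [descCycle_symm_val _ _ (by rw [hval]; exact hqm), hval] at h2
          split_ifs at h2 <;> omega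
        · rintro ⟨h1, h2⟩
          refine ⟨h1, ?_⟩
          rw [Fin.lt_def, hPk, hPs]
          have hb : (((Pp q m)⁻¹ ℓ) : ℕ) < m :=
            Pp_symm_lt q hq m ℓ (by have := Fin.lt_def.mp h1; omega)
          rw [descCycle_symm_val _ _ (by rw [hval]; exact hqm), hval]
          split_ifs <;> omega
      rw [hfe]
      -- count via the bijection Pp q m
      have hcard1 : (Finset.univ.filter fun ℓ : Fin n =>
            ℓ < k ∧ (q ⟨m, hmn⟩ : ℕ) ≤ (((Pp q m)⁻¹ ℓ) : ℕ)).card =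
          (Finset.univ.filter fun j : Fin n =>
            (q ⟨m, hmn⟩ : ℕ) ≤ (j : ℕ) ∧ (j : ℕ) < m).card := by
        apply Finset.card_bij' (fun ℓ _ => (Pp q m)⁻¹ ℓ) (fun j _ => Pp q m j)
        · intro ℓ hℓ
          simp only [Finset.mem_filter, Finset.mem_univ, true_and] at hℓ ⊢
          exact ⟨hℓ.2, Pp_symm_lt q hq m ℓ (by have := Fin.lt_def.mp hℓ.1; omega)⟩
        · intro j hj
          simp only [Finset.mem_filter, Finset.mem_univ, true_and] at hj ⊢
          constructor
          · rw [Fin.lt_def, hkm]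
            exact Pp_lt q hq m j hj.2
          · rw [Equiv.Perm.inv_def, Equiv.symm_apply_apply]
            exact hj.1
        · intro ℓ _; exact Equiv.apply_symm_apply _ _
        · intro j _; exact Equiv.symm_apply_apply _ _
      rw [hcard1]
      have hcard2 : (Finset.univ.filter fun j : Fin n =>
            (q ⟨m, hmn⟩ : ℕ) ≤ (j : ℕ) ∧ (j : ℕ) < m).card =
          m - (q ⟨m, hmn⟩ : ℕ) := by
        have himg : Finset.image Fin.val (Finset.univ.filter fun j : Fin n =>
            (q ⟨m, hmn⟩ : ℕ) ≤ (j : ℕ) ∧ (j : ℕ) < m) = Finset.Ico (q ⟨m, hmn⟩ : ℕ) m := by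
          ext a
          simp only [Finset.mem_image, Finset.mem_filter, Finset.mem_univ, true_and,
            Finset.mem_Ico]
          constructor
          · rintro ⟨j, ⟨h1, h2⟩, rfl⟩; exact ⟨h1, h2⟩
          · rintro ⟨h1, h2⟩; exact ⟨⟨a, by omega⟩, ⟨h1, h2⟩, rfl⟩
        rw [← Nat.card_Ico (q ⟨m, hmn⟩ : ℕ) m, ← himg,
          Finset.card_image_of_injective _ Fin.val_injective]
      rw [hcard2, hkeq]
      omega

end Main2


/-- If `v = (1,...,q_1) ∘ ... ∘ (n,...,q_n)` with descending cycles and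
`1 ≤ q_i ≤ i`, then `q_k = k − |{ ℓ < k : v⁻¹(ℓ) > v⁻¹(k) }|` for every `k`. -/
theorem stmt3 (n : ℕ) (v : Equiv.Perm (Fin n)) (q : Fin n → Fin n)
    (hq : ∀ i, q i ≤ i) (hv : v = descFactorization q) (k : Fin n) :
    (q k : ℕ) =
      (k : ℕ) - (Finset.univ.filter fun ℓ : Fin n => ℓ < k ∧ v.symm k < v.symm ℓ).card := by
  have hvP : v = Pp q n := by
    rw [hv]
    unfold descFactorization Pp
    rw [List.take_of_length_le (by rw [List.length_ofFn])]
  have h := main_lemma q hq n le_rfl k k.isLt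
  rw [hvP]
  have : (Pp q n).symm = (Pp q n)⁻¹ := rfl
  rw [this]
  exact h
end

section
/- The number of sequences (p_1,...,p_n) with i ≤ p_i ≤ n for all i equals n!, and the map sending (p_1,...,p_n) to the permutation (n,...,p_n) ∘ ... ∘ (1,...,p_1) is a bijection onto the symmetric group on [n]. -/
section aux
set_option linter.unnecessarySeqFocus false

def ascAux {n : ℕ} (i p : Fin n) (m : ℕ) : Equiv.Perm (Fin n) :=
  ((List.range m).filterMap fun j =>
    if h : (i : ℕ) ≤ j ∧ j + 1 ≤ (p : ℕ) then
      some (Equiv.swap (⟨j, by have := p.isLt; omega⟩ : Fin n)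
        (⟨j + 1, by have := p.isLt; omega⟩ : Fin n))
    else none).prod

lemma ascAux_apply {n : ℕ} (i p : Fin n) (m : ℕ) (x : Fin n) :
    ((ascAux i p m x : Fin n) : ℕ) =
      if (i : ℕ) ≤ x ∧ (x : ℕ) < min (p : ℕ) m then (x : ℕ) + 1
      else if (x : ℕ) = min (p : ℕ) m ∧ (i : ℕ) ≤ min (p : ℕ) m then (i : ℕ)
      else (x : ℕ) := by
  induction m generalizing x with
  | zero =>
      simp only [ascAux, List.range_zero, List.filterMap_nil, List.prod_nil,
        Equiv.Perm.coe_one, id_eq]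
      split_ifs <;> omega
  | succ m ih =>
      have hsplit : ascAux i p (m + 1) = ascAux i p m *
          (if h : (i : ℕ) ≤ m ∧ m + 1 ≤ (p : ℕ) then
            Equiv.swap (⟨m, by have := p.isLt; omega⟩ : Fin n)
              (⟨m + 1, by have := p.isLt; omega⟩ : Fin n) else 1) := by
        unfold ascAux
        rw [List.range_succ, List.filterMap_append, List.prod_append]
        congr 1
        simp only [List.filterMap_cons, List.filterMap_nil]
        split_ifs <;> simp_all <;> omega
      rw [hsplit, Equiv.Perm.mul_apply]
      by_cases h : (i : ℕ) ≤ m ∧ m + 1 ≤ (p : ℕ)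
      · rw [dif_pos h]
        rcases h with ⟨h1, h2⟩
        have hpn := p.isLt
        by_cases hx1 : (x : ℕ) = m + 1
        · have : x = (⟨m + 1, by omega⟩ : Fin n) := Fin.ext hx1
          rw [this, Equiv.swap_apply_right, ih]
          split_ifs <;> simp_all <;> omega
        · by_cases hx2 : (x : ℕ) = m
          · have : x = (⟨m, by omega⟩ : Fin n) := Fin.ext hx2
            rw [this, Equiv.swap_apply_left, ih]
            split_ifs <;> simp_all <;> omega
          · rw [Equiv.swap_apply_of_ne_of_ne (by simp [Fin.ext_iff, hx2])
              (by simp [Fin.ext_iff, hx1]), ih]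
            split_ifs <;> omega
      · rw [dif_neg h, Equiv.Perm.one_apply, ih]
        push_neg at h
        split_ifs <;> omega

lemma ascCycle_eq_ascAux {n : ℕ} (i p : Fin n) : ascCycle i p = ascAux i p n := rfl

lemma ascCycle_apply_of_lt {n : ℕ} (i p x : Fin n) (hx : (x : ℕ) < (i : ℕ)) :
    ascCycle i p x = x := by
  have h := ascAux_apply i p n x
  rw [← ascCycle_eq_ascAux] at h
  apply Fin.ext
  rw [h]
  split_ifs <;> omega

lemma ascCycle_apply_p {n : ℕ} (i p : Fin n) (hip : i ≤ p) :
    ascCycle i p p = i := by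
  have h := ascAux_apply i p n p
  rw [← ascCycle_eq_ascAux] at h
  apply Fin.ext
  rw [h]
  have := p.isLt
  have : min (p : ℕ) n = (p : ℕ) := by omega
  split_ifs <;> omega

lemma prod_apply_fix {n : ℕ} (l : List (Equiv.Perm (Fin n))) (x : Fin n)
    (h : ∀ g ∈ l, g x = x) : l.prod x = x := by
  induction l with
  | nil => rfl
  | cons a l ih =>
      rw [List.prod_cons, Equiv.Perm.mul_apply, ih (fun g hg => h g (List.mem_cons_of_mem a hg)),
        h a List.mem_cons_self]

/-- the key "suffix product sends `p k` to `k`" fact -/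
lemma suffix_prod_apply {n : ℕ} (p : Fin n → Fin n) (hp : ∀ i, i ≤ p i) (k : Fin n) :
    (((List.ofFn fun i : Fin n => ascCycle i (p i)).drop (k : ℕ)).reverse).prod (p k) = k := by
  set f : Fin n → Equiv.Perm (Fin n) := fun i => ascCycle i (p i) with hf
  have hlen : (List.ofFn f).length = n := List.length_ofFn
  have hdrop : (List.ofFn f).drop (k : ℕ) = f k :: (List.ofFn f).drop ((k : ℕ) + 1) := by
    rw [List.drop_eq_getElem_cons (by omega)]
    congr 1
    simp [Fin.eta]
  rw [hdrop, List.reverse_cons, List.prod_append, List.prod_singleton, Equiv.Perm.mul_apply]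
  have h1 : f k (p k) = k := ascCycle_apply_p k (p k) (hp k)
  rw [h1]
  apply prod_apply_fix
  intro g hg
  rw [List.mem_reverse] at hg
  obtain ⟨t, ht, hgt⟩ := List.getElem_of_mem hg
  have hlt : (k : ℕ) + 1 + t < n := by
    have := ht
    simp only [List.length_drop, hlen] at this
    omega
  rw [List.getElem_drop, List.getElem_ofFn] at hgt
  subst hgt
  exact ascCycle_apply_of_lt _ _ k (by simp; omega)

lemma prod_range_sub (n : ℕ) : ∏ i ∈ Finset.range n, (n - i) = n.factorial := by
  induction n with
  | zero => simp
  | succ n ih =>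
      rw [Finset.prod_range_succ']
      simp only [Nat.add_sub_cancel, Nat.succ_sub_succ]
      rw [ih, Nat.factorial_succ, Nat.sub_zero, mul_comm]

lemma asc_key {n : ℕ} (p q : Fin n → Fin n) (hp : ∀ i, i ≤ p i) (hq : ∀ i, i ≤ q i)
    (h : ascFactorization p = ascFactorization q) (k : Fin n)
    (hlt : ∀ j : Fin n, (j : ℕ) < (k : ℕ) → p j = q j) : p k = q k := by
  unfold ascFactorization at h
  set fp := fun i : Fin n => ascCycle i (p i) with hfp
  set fq := fun i : Fin n => ascCycle i (q i) with hfq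
  have htake : (List.ofFn fp).take (k : ℕ) = (List.ofFn fq).take (k : ℕ) := by
    apply List.ext_getElem (by simp)
    intro t h1 h2
    simp only [List.getElem_take, List.getElem_ofFn, hfp, hfq]
    have ht : t < (k : ℕ) := by simp at h1; omega
    rw [hlt _ (by simpa using ht)]
  have hsplit : ∀ (L : List (Equiv.Perm (Fin n))),
      L.reverse.prod = (L.drop (k : ℕ)).reverse.prod * (L.take (k : ℕ)).reverse.prod := by
    intro L
    conv_lhs => rw [← List.take_append_drop (k : ℕ) L]
    rw [List.reverse_append, List.prod_append]
  rw [hsplit (List.ofFn fp), hsplit (List.ofFn fq), htake] at h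
  have h' := mul_right_cancel h
  have h1 := suffix_prod_apply p hp k
  have h2 := suffix_prod_apply q hq k
  rw [← hfp] at h1
  rw [← hfq] at h2
  rw [h'] at h1
  exact (Equiv.injective _) (h1.trans h2.symm)

/-- The number of sequences `(p_1,...,p_n)` with `i ≤ p_i ≤ n` equals `n!`,
and `(p_1,...,p_n) ↦ (n,...,p_n) ∘ ... ∘ (1,...,p_1)` is a bijection onto the symmetric
group on `[n]`. -/
theorem stmt4 (n : ℕ) :
    Fintype.card {p : Fin n → Fin n // ∀ i, i ≤ p i} = Nat.factorial n ∧
    Function.Bijective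
      (fun p : {p : Fin n → Fin n // ∀ i, i ≤ p i} => ascFactorization p.1) := by
  have hcard : Fintype.card {p : Fin n → Fin n // ∀ i, i ≤ p i} = Nat.factorial n := by
    rw [Fintype.card_congr (Equiv.subtypePiEquivPi (p := fun i j => i ≤ j)),
      Fintype.card_pi]
    have h1 : ∀ i : Fin n, Fintype.card {j : Fin n // i ≤ j} = n - (i : ℕ) := by
      intro i
      rw [Fintype.card_subtype]
      have : Finset.filter (fun j => i ≤ j) Finset.univ = Finset.Ici i := by
        ext j; simp
      rw [this, Fin.card_Ici]
    calc ∏ i : Fin n, Fintype.card {j : Fin n // i ≤ j}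
        = ∏ i : Fin n, (n - (i : ℕ)) := by exact Finset.prod_congr rfl fun i _ => h1 i
      _ = ∏ i ∈ Finset.range n, (n - i) := Fin.prod_univ_eq_prod_range _ n
      _ = n.factorial := prod_range_sub n
  refine ⟨hcard, ?_⟩
  rw [Fintype.bijective_iff_injective_and_card]
  constructor
  · rintro ⟨p, hp⟩ ⟨q, hq⟩ h
    simp only [Subtype.mk.injEq] at h ⊢
    unfold ascFactorization at h
    have key : ∀ m : ℕ, ∀ k : Fin n, (k : ℕ) ≤ m → p k = q k := by
      intro m
      induction m with
      | zero =>
          intro k hk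
          refine asc_key p q hp hq h k ?_
          intro j hj
          exact absurd (Nat.lt_of_lt_of_le hj hk) (Nat.not_lt_zero _)
      | succ m ih =>
          intro k hk
          rcases Nat.lt_or_ge (k : ℕ) (m + 1) with hk' | hk'
          · exact ih k (Nat.lt_succ_iff.mp hk')
          · refine asc_key p q hp hq h k ?_
            intro j hj
            exact ih j (Nat.lt_succ_iff.mp (Nat.lt_of_lt_of_le hj hk))
    funext k
    exact key n k (Nat.le_of_lt k.isLt)
  · rw [hcard, Fintype.card_perm, Fintype.card_fin]
end aux
end

section
/- Let σ = (σ_{ab})_{a≠b∈[d]} be a family of permutations of [n] indexed by ordered pairs of distinct elements of [d], with σ_{ba} the reverse of σ_{ab}. For distinct i,j ∈ [n], define the tournament G_{ij}(σ) on [d] with edge a→b iff i precedes j in σ_{ab}. Suppose all G_{ij}(σ) are acyclic. Define σ*_{ij} to be the permutation of [d] listing the vertices of G_{ij}(σ) in decreasing order of out-degree. Then for all distinct a,b ∈ [d] and distinct i,j ∈ [n]: i precedes j in σ_{ab} if and only if a precedes b in σ*_{ij}. -/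
open scoped Classical

/-- `i` precedes `j` in the permutation `u`, viewed as the word `u 0, u 1, ..., u (n-1)`. -/
def precedes {n : ℕ} (u : Equiv.Perm (Fin n)) (i j : Fin n) : Prop :=
  u.symm i < u.symm j

/-- A directed graph (relation) is acyclic: no directed cycle, i.e. no vertex reaches
itself by a nonempty directed walk. -/
def IsAcyclicRel {d : ℕ} (r : Fin d → Fin d → Prop) : Prop :=
  ∀ a, ¬ Relation.TransGen r a a

/-- The tournament `G_{ij}(σ)` on `[d]`: `a → b` iff `i` precedes `j` in `σ_{ab}`. -/
def tournG {n d : ℕ} (σ : Fin d → Fin d → Equiv.Perm (Fin n)) (i j : Fin n)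
    (a b : Fin d) : Prop :=
  a ≠ b ∧ precedes (σ a b) i j

/-- A system of permutations on the edges of `n·Δ_{d-1}`: a family `(σ_{ab})` of
permutations of `[n]` with `σ_{ba}` the reverse word of `σ_{ab}`. -/
def IsSystem {n d : ℕ} (σ : Fin d → Fin d → Equiv.Perm (Fin n)) : Prop :=
  ∀ a b : Fin d, a ≠ b → ∀ k : Fin n, σ b a k = σ a b k.rev

/-- An acyclic system of permutations: all the tournaments `G_{ij}(σ)` are acyclic. -/
def IsAcyclicSystem {n d : ℕ} (σ : Fin d → Fin d → Equiv.Perm (Fin n)) : Prop :=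
  IsSystem σ ∧ ∀ i j : Fin n, i ≠ j → IsAcyclicRel (tournG σ i j)

/-- `a` is the unique source (vertex with no incoming edge) of the digraph `r`. -/
def IsUniqueSource {d : ℕ} (r : Fin d → Fin d → Prop) (a : Fin d) : Prop :=
  (∀ b, ¬ r b a) ∧ ∀ a', (∀ b, ¬ r b a') → a' = a

/-- Out-degree of a vertex in a digraph on `[d]`. -/
noncomputable def outdeg {d : ℕ} (r : Fin d → Fin d → Prop) (a : Fin d) : ℕ :=
  (Finset.univ.filter fun b => r a b).card

/-- `a`-th coordinate of the position of the `i`-th simplex of an acyclic system `σ`: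
`x_a^i = |{ j ≠ i : a is the unique source of G_{ij}(σ) }|`. -/
noncomputable def simplexPos {n d : ℕ} (σ : Fin d → Fin d → Equiv.Perm (Fin n))
    (i : Fin n) (a : Fin d) : ℕ :=
  (Finset.univ.filter fun j : Fin n => j ≠ i ∧ IsUniqueSource (tournG σ i j) a).card

/-- `τ` is the dual system `σ*` of `σ`: for `i ≠ j`, the word `τ i j` lists the vertices
of the tournament `G_{ij}(σ)` in decreasing order of out-degree. -/
def IsDualOf {n d : ℕ} (σ : Fin d → Fin d → Equiv.Perm (Fin n))
    (τ : Fin n → Fin n → Equiv.Perm (Fin d)) : Prop :=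
  ∀ i j : Fin n, i ≠ j → ∀ k : Fin d,
    outdeg (tournG σ i j) (τ i j k) = d - 1 - (k : ℕ)

/-- The order-preserving injection `Fin (d-1) → Fin d` skipping `a`. -/
def liftIdx {d : ℕ} (a : Fin d) (b : Fin (d - 1)) : Fin d :=
  if h : (b : ℕ) < (a : ℕ) then ⟨b, by have := a.isLt; omega⟩
  else ⟨(b : ℕ) + 1, by have := b.isLt; omega⟩

/-- `v` is the permutation (word) of `[n] ∖ {i}` obtained from `u` by deleting the letter
`i`, with the remaining letters relabelled order-preservingly by `liftIdx i`. -/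
def IsDeletionOf {n : ℕ} (v : Equiv.Perm (Fin (n - 1))) (u : Equiv.Perm (Fin n))
    (i : Fin n) : Prop :=
  ∀ x y : Fin (n - 1), precedes v x y ↔ precedes u (liftIdx i x) (liftIdx i y)

lemma symm_rev {n d : ℕ} (σ : Fin d → Fin d → Equiv.Perm (Fin n))
    (hs : IsSystem σ) {a b : Fin d} (hab : a ≠ b) (i : Fin n) :
    (σ b a).symm i = ((σ a b).symm i).rev := by
  have : σ b a (((σ a b).symm i).rev) = i := by
    rw [hs a b hab, Fin.rev_rev, Equiv.apply_symm_apply]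
  exact (σ b a).symm_apply_eq.mpr this.symm

lemma tourn_total {n d : ℕ} (σ : Fin d → Fin d → Equiv.Perm (Fin n))
    (hs : IsSystem σ) {i j : Fin n} (hij : i ≠ j) {a b : Fin d} (hab : a ≠ b) :
    tournG σ i j a b ↔ ¬ tournG σ i j b a := by
  have hne : (σ a b).symm i ≠ (σ a b).symm j := fun h => hij (by
    have := congrArg (σ a b) h; simpa using this)
  unfold tournG precedes
  rw [symm_rev σ hs hab i, symm_rev σ hs hab j, Fin.rev_lt_rev]
  constructor
  · rintro ⟨-, h⟩ ⟨-, h'⟩; exact absurd (h.trans h') (lt_irrefl _)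
  · intro h
    refine ⟨hab, ?_⟩
    rcases lt_trichotomy ((σ a b).symm i) ((σ a b).symm j) with h1 | h1 | h1
    · exact h1
    · exact absurd h1 hne
    · exact absurd ⟨hab.symm, h1⟩ h

lemma outdeg_lt {d : ℕ} {r : Fin d → Fin d → Prop} (hirr : ∀ c, ¬ r c c)
    (htr : ∀ x y z, r x y → r y z → r x z) {a b : Fin d} (h : r a b) :
    outdeg r b < outdeg r a := by
  apply Finset.card_lt_card
  constructor
  · intro c hc
    simp only [Finset.mem_filter, Finset.mem_univ, true_and] at *
    exact htr a b c h hc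
  · intro hsub
    have hb : b ∈ Finset.univ.filter fun c => r a c := by
      simp only [Finset.mem_filter, Finset.mem_univ, true_and]; exact h
    have := hsub hb
    simp only [Finset.mem_filter, Finset.mem_univ, true_and] at this
    exact hirr b this

/-- Let `σ` be a system of permutations of `[n]` with all tournaments
`G_{ij}(σ)` acyclic, and let `τ` with `τ i j` listing the vertices of `G_{ij}(σ)` by
decreasing out-degree (the dual system `σ*`).  Then `i` precedes `j` in `σ_{ab}` iff `a`
precedes `b` in `σ*_{ij}`. -/
theorem stmt7 (n d : ℕ) (σ : Fin d → Fin d → Equiv.Perm (Fin n))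
    (hσ : IsAcyclicSystem σ)
    (τ : Fin n → Fin n → Equiv.Perm (Fin d)) (hτ : IsDualOf σ τ)
    (a b : Fin d) (hab : a ≠ b) (i j : Fin n) (hij : i ≠ j) :
    precedes (σ a b) i j ↔ precedes (τ i j) a b := by
  obtain ⟨hs, hac⟩ := hσ
  set r := tournG σ i j with hr
  have hirr : ∀ c, ¬ r c c := fun c h => h.1 rfl
  have hacy := hac i j hij
  have htr : ∀ x y z, r x y → r y z → r x z := by
    intro x y z hxy hyz
    have hxz : x ≠ z := by
      rintro rfl
      exact hacy x (Relation.TransGen.head hxy (Relation.TransGen.single hyz))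
    by_contra h
    have hzx : r z x := not_not.mp (fun hn => h ((tourn_total σ hs hij hxz).mpr hn))
    exact hacy x (Relation.TransGen.head hxy
      (Relation.TransGen.head hyz (Relation.TransGen.single hzx)))
  have key : ∀ x y : Fin d, x ≠ y → (r x y ↔ outdeg r y < outdeg r x) := by
    intro x y hxy
    constructor
    · exact outdeg_lt hirr htr
    · intro hlt
      by_contra h
      have hyx : r y x := not_not.mp (fun hn => h ((tourn_total σ hs hij hxy).mpr hn))
      exact absurd (outdeg_lt hirr htr hyx) (by omega)
  have hprec : precedes (σ a b) i j ↔ r a b := by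
    constructor
    · exact fun h => ⟨hab, h⟩
    · exact fun h => h.2
  rw [hprec, key a b hab]
  have hda : outdeg r a = d - 1 - ((τ i j).symm a : ℕ) := by
    have := hτ i j hij ((τ i j).symm a)
    rwa [Equiv.apply_symm_apply] at this
  have hdb : outdeg r b = d - 1 - ((τ i j).symm b : ℕ) := by
    have := hτ i j hij ((τ i j).symm b)
    rwa [Equiv.apply_symm_apply] at this
  have hne : (τ i j).symm a ≠ (τ i j).symm b := fun h => hab (by
    have := congrArg (τ i j) h; simpa using this)
  have hka := ((τ i j).symm a).isLt
  have hkb := ((τ i j).symm b).isLt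
  unfold precedes
  rw [hda, hdb, Fin.lt_def]
  have hne' : ((τ i j).symm a : ℕ) ≠ ((τ i j).symm b : ℕ) :=
    fun h => hne (Fin.ext h)
  omega
end

section
/- Let σ be an acyclic system of permutations on the edges of n·Δ_{d−1} and let a ∈ [d]. Define the contraction σ/a as the restriction of σ to the pairs (b,c) with b,c ∈ [d]∖{a}. Then σ/a is an acyclic system of permutations on the edges of n·Δ_{d−2}, and the duality identities (σ∖i)* = σ*/i and (σ/a)* = σ*∖a hold. -/
open scoped Classical

lemma liftIdx_injective {d : ℕ} (a : Fin d) : Function.Injective (liftIdx a) := by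
  intro x y h
  unfold liftIdx at h
  split_ifs at h with h1 h2 h2 <;>
    · have := congrArg Fin.val h
      simp only [] at this
      exact Fin.ext (by omega)

lemma liftIdx_ne {d : ℕ} (a : Fin d) (b : Fin (d - 1)) : liftIdx a b ≠ a := by
  unfold liftIdx; split_ifs with h <;> (intro hh; have := congrArg Fin.val hh; simp at this; omega)

lemma liftIdx_surj {d : ℕ} (a c : Fin d) (h : c ≠ a) : ∃ y, liftIdx a y = c := by
  have hc := c.isLt
  have hne : (c : ℕ) ≠ (a : ℕ) := fun hh => h (Fin.ext hh)
  by_cases hlt : (c : ℕ) < (a : ℕ)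
  · refine ⟨⟨c, by have := a.isLt; omega⟩, ?_⟩
    unfold liftIdx; rw [dif_pos hlt]
  · refine ⟨⟨(c : ℕ) - 1, by omega⟩, ?_⟩
    unfold liftIdx
    rw [dif_neg (by simp; omega)]
    exact Fin.ext (by simp; omega)

lemma outdeg_congr {d : ℕ} {r s : Fin d → Fin d → Prop} (h : ∀ x y, r x y ↔ s x y)
    (x : Fin d) : outdeg r x = outdeg s x := by
  unfold outdeg; congr 1; exact Finset.filter_congr (fun y _ => by simpa using h x y)

lemma precedes_dual {e : ℕ} (G : Fin e → Fin e → Prop) (t : Equiv.Perm (Fin e))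
    (h : ∀ k, outdeg G (t k) = e - 1 - (k : ℕ)) (u v : Fin e) :
    precedes t u v ↔ outdeg G u > outdeg G v := by
  have hu : outdeg G u = e - 1 - (t.symm u : ℕ) := by
    conv_lhs => rw [← t.apply_symm_apply u]
    exact h _
  have hv : outdeg G v = e - 1 - (t.symm v : ℕ) := by
    conv_lhs => rw [← t.apply_symm_apply v]
    exact h _
  have h1 := (t.symm u).isLt
  have h2 := (t.symm v).isLt
  unfold precedes
  rw [Fin.lt_def]
  omega

lemma dual_inj {e : ℕ} (G : Fin e → Fin e → Prop) (t : Equiv.Perm (Fin e))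
    (h : ∀ k, outdeg G (t k) = e - 1 - (k : ℕ)) : Function.Injective (outdeg G) := by
  intro u v huv
  have hu : outdeg G u = e - 1 - (t.symm u : ℕ) := by
    conv_lhs => rw [← t.apply_symm_apply u]
    exact h _
  have hv : outdeg G v = e - 1 - (t.symm v : ℕ) := by
    conv_lhs => rw [← t.apply_symm_apply v]
    exact h _
  have h1 := (t.symm u).isLt
  have h2 := (t.symm v).isLt
  have : t.symm u = t.symm v := Fin.ext (by omega)
  have := congrArg t this
  simpa using this

/-- The contraction `σ/a` of an acyclic system of permutations on the
edges of `n·Δ_{d-1}` is an acyclic system of permutations on the edges of `n·Δ_{d-2}`,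
and the duality identities `(σ∖i)* = σ*/i` and `(σ/a)* = σ*∖a` hold. -/
theorem stmt10 (n d : ℕ) (σ : Fin d → Fin d → Equiv.Perm (Fin n))
    (hσ : IsAcyclicSystem σ) (a : Fin d) (i : Fin n)
    -- the contraction σ/a :
    (σc : Fin (d - 1) → Fin (d - 1) → Equiv.Perm (Fin n))
    (hc : ∀ b c : Fin (d - 1), σc b c = σ (liftIdx a b) (liftIdx a c))
    -- the dual σ* :
    (τ : Fin n → Fin n → Equiv.Perm (Fin d)) (hτ : IsDualOf σ τ)
    -- the deletion σ∖i :
    (σd : Fin d → Fin d → Equiv.Perm (Fin (n - 1)))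
    (hd : ∀ b c : Fin d, b ≠ c → IsDeletionOf (σd b c) (σ b c) i)
    -- the dual (σ∖i)* :
    (ρ : Fin (n - 1) → Fin (n - 1) → Equiv.Perm (Fin d)) (hρ : IsDualOf σd ρ)
    -- the dual (σ/a)* :
    (μ : Fin n → Fin n → Equiv.Perm (Fin (d - 1))) (hμ : IsDualOf σc μ) :
    IsAcyclicSystem σc ∧
    -- (σ∖i)* = σ*/i :
    (∀ j k : Fin (n - 1), j ≠ k → ρ j k = τ (liftIdx i j) (liftIdx i k)) ∧
    -- (σ/a)* = σ*∖a :
    (∀ j k : Fin n, j ≠ k → IsDeletionOf (μ j k) (τ j k) a) := by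
  have hinj := liftIdx_injective a
  -- tournG transfer for the contraction
  have htc : ∀ (j k : Fin n) (x y : Fin (d - 1)),
      tournG σc j k x y ↔ tournG σ j k (liftIdx a x) (liftIdx a y) := by
    intro j k x y
    unfold tournG
    rw [hc]
    constructor
    · rintro ⟨hxy, hp⟩; exact ⟨fun hh => hxy (hinj hh), hp⟩
    · rintro ⟨hxy, hp⟩; exact ⟨fun hh => hxy (congrArg _ hh), hp⟩
  refine ⟨⟨?_, ?_⟩, ?_, ?_⟩
  · -- system
    intro b c hbc k
    rw [hc, hc]
    exact hσ.1 _ _ (fun hh => hbc (hinj hh)) k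
  · -- acyclic
    intro j k hjk x hx
    have : Relation.TransGen (tournG σ j k) (liftIdx a x) (liftIdx a x) :=
      Relation.TransGen.lift (liftIdx a) (fun p q hpq => (htc j k p q).1 hpq) x x hx
    exact hσ.2 j k hjk _ this
  · -- (σ∖i)* = σ*/i
    intro j k hjk
    have hjk' : liftIdx i j ≠ liftIdx i k := fun hh => hjk (liftIdx_injective i hh)
    have hG : ∀ b c : Fin d, tournG σd j k b c ↔ tournG σ (liftIdx i j) (liftIdx i k) b c := by
      intro b c
      unfold tournG
      constructor
      · rintro ⟨hbc, hp⟩; exact ⟨hbc, (hd b c hbc j k).1 hp⟩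
      · rintro ⟨hbc, hp⟩; exact ⟨hbc, (hd b c hbc j k).2 hp⟩
    have hτ' := hτ _ _ hjk'
    have hρ' := hρ _ _ hjk
    have hinjG := dual_inj _ _ hτ'
    refine Equiv.ext fun m => hinjG ?_
    rw [hτ' m, ← outdeg_congr hG, hρ' m]
  · -- (σ/a)* = σ*∖a
    intro j k hjk x y
    have hμ' := hμ _ _ hjk
    have hτ' := hτ _ _ hjk
    set G := tournG σ j k with hGdef
    set Gc := tournG σc j k with hGcdef
    have hbound : ∀ z : Fin (d - 1),
        outdeg Gc z ≤ outdeg G (liftIdx a z) ∧ outdeg G (liftIdx a z) ≤ outdeg Gc z + 1 := by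
      intro z
      have hT : outdeg Gc z =
          (Finset.univ.filter fun y : Fin (d-1) => G (liftIdx a z) (liftIdx a y)).card := by
        unfold outdeg
        congr 1
        exact Finset.filter_congr (fun y _ => by simpa using htc j k z y)
      set T := Finset.univ.filter fun y : Fin (d-1) => G (liftIdx a z) (liftIdx a y) with hTdef
      set S := Finset.univ.filter fun c : Fin d => G (liftIdx a z) c with hSdef
      have himg : T.image (liftIdx a) ⊆ S := by
        intro c hcmem
        obtain ⟨y, hy, rfl⟩ := Finset.mem_image.1 hcmem
        simp only [hTdef, Finset.mem_filter] at hy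
        simp [hSdef, hy.2]
      have hsub : S ⊆ insert a (T.image (liftIdx a)) := by
        intro c hcmem
        simp only [hSdef, Finset.mem_filter] at hcmem
        by_cases hca : c = a
        · simp [hca]
        · obtain ⟨y, rfl⟩ := liftIdx_surj a c hca
          refine Finset.mem_insert_of_mem (Finset.mem_image.2 ⟨y, ?_, rfl⟩)
          simp [hTdef, hcmem.2]
      have hcard : (T.image (liftIdx a)).card = T.card :=
        Finset.card_image_of_injective _ hinj
      have h1 : T.card ≤ S.card := hcard ▸ Finset.card_le_card himg
      have h2 : S.card ≤ T.card + 1 := by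
        calc S.card ≤ (insert a (T.image (liftIdx a))).card := Finset.card_le_card hsub
        _ ≤ (T.image (liftIdx a)).card + 1 := Finset.card_insert_le _ _
        _ = T.card + 1 := by rw [hcard]
      have hS : outdeg G (liftIdx a z) = S.card := rfl
      constructor <;> omega
    by_cases hxy : x = y
    · subst hxy
      unfold precedes
      simp
    · have hp1 : precedes (μ j k) x y ↔ outdeg Gc x > outdeg Gc y :=
        precedes_dual Gc (μ j k) hμ' x y
      have hp2 : precedes (τ j k) (liftIdx a x) (liftIdx a y) ↔
          outdeg G (liftIdx a x) > outdeg G (liftIdx a y) :=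
        precedes_dual G (τ j k) hτ' _ _
      have hinjG := dual_inj _ _ hτ'
      have hinjGc := dual_inj _ _ hμ'
      have hne1 : outdeg Gc x ≠ outdeg Gc y := fun hh => hxy (hinjGc hh)
      have hne2 : outdeg G (liftIdx a x) ≠ outdeg G (liftIdx a y) :=
        fun hh => hxy (hinj (hinjG hh))
      have hbx := hbound x
      have hby := hbound y
      rw [hp1, hp2]
      omega
end

section
/- There is a bijection between lozenge tilings of n·Δ_2 and vertex-disjoint routings in the directed graph G_n whose vertices are the lattice points {(x_1,x_2,x_3) ∈ ℤ^3_{≥0} : x_1+x_2+x_3 = n−1} with each non-bottom-row vertex connected to the two vertices directly below it, where a routing is a set of n vertex-disjoint directed paths ending at the n bottom vertices. -/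
open scoped Classical

/-- Upward unit triangles of `n·Δ_2`: pairs `(r, c)` (row from the top, column) with
`c ≤ r ≤ n - 1`.  There are `n(n+1)/2` of them. -/
abbrev UpT (n : ℕ) := {p : Fin n × Fin n // p.2 ≤ p.1}

/-- Downward unit triangles of `n·Δ_2`: pairs `(r, c)` with `c < r ≤ n - 1`.
There are `n(n-1)/2` of them. -/
abbrev DownT (n : ℕ) := {p : Fin n × Fin n // p.2 < p.1}

/-- The downward triangle `(r, c)` is adjacent (shares an edge) with exactly the three
upward triangles `(r, c)` (on its left), `(r, c+1)` (on its right) and `(r-1, c)`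
(above it). -/
def AdjDU {n : ℕ} (dt : DownT n) (u : UpT n) : Prop :=
  ((u.1.1 : ℕ) = (dt.1.1 : ℕ) ∧ (u.1.2 : ℕ) = (dt.1.2 : ℕ)) ∨
  ((u.1.1 : ℕ) = (dt.1.1 : ℕ) ∧ (u.1.2 : ℕ) = (dt.1.2 : ℕ) + 1) ∨
  ((u.1.1 : ℕ) + 1 = (dt.1.1 : ℕ) ∧ (u.1.2 : ℕ) = (dt.1.2 : ℕ))

/-- A lozenge tiling of `n·Δ_2`, encoded as an injective map pairing each downward unit
triangle with an adjacent upward unit triangle (forming the rhombi); the upward triangles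
not paired with any downward triangle are the unit triangle tiles. -/
def IsLozengeTiling {n : ℕ} (f : DownT n → UpT n) : Prop :=
  Function.Injective f ∧ ∀ dt, AdjDU dt (f dt)

/-- Vertices of the triangular-array graph `G_n`: lattice points
`(x₁, x₂, x₃) ∈ ℤ³_{≥0}` with `x₁ + x₂ + x₃ = n - 1`. -/
abbrev RVert (n : ℕ) := {x : Fin n × Fin n × Fin n // (x.1 : ℕ) + x.2.1 + x.2.2 = n - 1}

/-- Edges of `G_n`: from `(x₁, x₂, x₃)` with `x₁ > 0` to `(x₁-1, x₂+1, x₃)` and to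
`(x₁-1, x₂, x₃+1)` (the two vertices directly below it; the bottom row is `x₁ = 0`). -/
def REdge {n : ℕ} (x y : RVert n) : Prop :=
  (y.1.1 : ℕ) + 1 = (x.1.1 : ℕ) ∧
  (((y.1.2.1 : ℕ) = (x.1.2.1 : ℕ) + 1 ∧ (y.1.2.2 : ℕ) = (x.1.2.2 : ℕ)) ∨
   ((y.1.2.1 : ℕ) = (x.1.2.1 : ℕ) ∧ (y.1.2.2 : ℕ) = (x.1.2.2 : ℕ) + 1))

/-- A vertex-disjoint routing to the bottom row of `G_n`: a set `E` of edges of `G_n`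
such that every vertex has at most one outgoing and at most one incoming edge of `E`
(so `E` decomposes into vertex-disjoint directed paths), and every non-bottom vertex
with an incoming edge has an outgoing edge (so every path ends at a bottom vertex;
there is one, possibly trivial, path ending at each of the `n` bottom vertices). -/
def IsRouting {n : ℕ} (E : RVert n → RVert n → Prop) : Prop :=
  (∀ x y, E x y → REdge x y) ∧
  (∀ x y z, E x y → E x z → y = z) ∧
  (∀ x y z, E y x → E z x → y = z) ∧
  (∀ x, (x.1.1 : ℕ) ≠ 0 → (∃ y, E y x) → ∃ z, E x z)

section Stmt15Aux

variable {n : ℕ}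

lemma rvert_ext' {x y : Fin n × Fin n × Fin n}
    (h1 : (x.1 : ℕ) = y.1) (h2 : (x.2.1 : ℕ) = y.2.1) (h3 : (x.2.2 : ℕ) = y.2.2) :
    x = y := by
  obtain ⟨a, b, c⟩ := x; obtain ⟨a', b', c'⟩ := y
  simp only at h1 h2 h3
  simp [Prod.ext_iff, Fin.ext_iff, h1, h2, h3]

lemma rvert_ext {x y : {x : Fin n × Fin n × Fin n // (x.1 : ℕ) + x.2.1 + x.2.2 = n - 1}}
    (h1 : (x.1.1 : ℕ) = y.1.1) (h2 : (x.1.2.1 : ℕ) = y.1.2.1)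
    (h3 : (x.1.2.2 : ℕ) = y.1.2.2) : x = y :=
  Subtype.ext (rvert_ext' h1 h2 h3)

lemma pair_ext {P : Fin n × Fin n → Prop} {u v : {p : Fin n × Fin n // P p}}
    (h1 : (u.1.1 : ℕ) = v.1.1) (h2 : (u.1.2 : ℕ) = v.1.2) : u = v := by
  apply Subtype.ext
  obtain ⟨⟨a, b⟩, _⟩ := u; obtain ⟨⟨a', b'⟩, _⟩ := v
  simp only at h1 h2
  simp [Prod.ext_iff, Fin.ext_iff, h1, h2]

/-- the upward triangle at vertex `y` : row `y₂+y₃`, column `y₂`. -/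
def uOf (y : RVert n) : UpT n :=
  ⟨(⟨(y.1.2.1 : ℕ) + (y.1.2.2 : ℕ), by have := y.2; have := y.1.1.isLt; omega⟩,
    ⟨(y.1.2.1 : ℕ), y.1.2.1.isLt⟩), by
      show (y.1.2.1 : ℕ) ≤ (y.1.2.1 : ℕ) + (y.1.2.2 : ℕ); omega⟩

@[simp] lemma uOf_r (y : RVert n) : ((uOf y).1.1 : ℕ) = (y.1.2.1 : ℕ) + (y.1.2.2 : ℕ) := rfl
@[simp] lemma uOf_c (y : RVert n) : ((uOf y).1.2 : ℕ) = (y.1.2.1 : ℕ) := rfl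

lemma uOf_inj {y z : RVert n} (h : uOf y = uOf z) : y = z := by
  have h1 : ((uOf y).1.1 : ℕ) = ((uOf z).1.1 : ℕ) := by rw [h]
  have h2 : ((uOf y).1.2 : ℕ) = ((uOf z).1.2 : ℕ) := by rw [h]
  simp only [uOf_r, uOf_c] at h1 h2
  have hy := y.2; have hz := z.2
  exact rvert_ext (by omega) (by omega) (by omega)

/-- the downward triangle just below vertex `x` (for `x` not in the bottom row):
row `x₂+x₃+1`, column `x₂`. -/
def dOf (x : RVert n) (h : (x.1.1 : ℕ) ≠ 0) : DownT n :=
  ⟨(⟨(x.1.2.1 : ℕ) + (x.1.2.2 : ℕ) + 1, by have := x.2; omega⟩,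
    ⟨(x.1.2.1 : ℕ), x.1.2.1.isLt⟩), by
      show (x.1.2.1 : ℕ) < (x.1.2.1 : ℕ) + (x.1.2.2 : ℕ) + 1; omega⟩

@[simp] lemma dOf_r (x : RVert n) (h : (x.1.1 : ℕ) ≠ 0) :
    ((dOf x h).1.1 : ℕ) = (x.1.2.1 : ℕ) + (x.1.2.2 : ℕ) + 1 := rfl
@[simp] lemma dOf_c (x : RVert n) (h : (x.1.1 : ℕ) ≠ 0) :
    ((dOf x h).1.2 : ℕ) = (x.1.2.1 : ℕ) := rfl

lemma dOf_inj {y z : RVert n} {h h'} (he : dOf y h = dOf z h') : y = z := by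
  have h1 : ((dOf y h).1.1 : ℕ) = ((dOf z h').1.1 : ℕ) := by rw [he]
  have h2 : ((dOf y h).1.2 : ℕ) = ((dOf z h').1.2 : ℕ) := by rw [he]
  simp only [dOf_r, dOf_c] at h1 h2
  have hy := y.2; have hz := z.2
  exact rvert_ext (by omega) (by omega) (by omega)

/-- the vertex just above downward triangle `d`: coordinates `(n-R, C, R-1-C)`. -/
def vA (d : DownT n) : RVert n :=
  ⟨(⟨n - (d.1.1 : ℕ), by
      have h1 : (d.1.2 : ℕ) < (d.1.1 : ℕ) := d.2
      have h2 := d.1.1.isLt; omega⟩,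
    ⟨(d.1.2 : ℕ), d.1.2.isLt⟩,
    ⟨(d.1.1 : ℕ) - 1 - (d.1.2 : ℕ), by have := d.1.1.isLt; omega⟩), by
      show n - (d.1.1 : ℕ) + (d.1.2 : ℕ) + ((d.1.1 : ℕ) - 1 - (d.1.2 : ℕ)) = n - 1
      have h1 : (d.1.2 : ℕ) < (d.1.1 : ℕ) := d.2
      have h2 := d.1.1.isLt; omega⟩

@[simp] lemma vA_1 (d : DownT n) : ((vA d).1.1 : ℕ) = n - (d.1.1 : ℕ) := rfl
@[simp] lemma vA_2 (d : DownT n) : ((vA d).1.2.1 : ℕ) = (d.1.2 : ℕ) := rfl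
@[simp] lemma vA_3 (d : DownT n) : ((vA d).1.2.2 : ℕ) = (d.1.1 : ℕ) - 1 - (d.1.2 : ℕ) := rfl

lemma vA_ne (d : DownT n) : ((vA d).1.1 : ℕ) ≠ 0 := by
  have := d.1.1.isLt; simp; omega

/-- the upward triangle above `d`: `(R-1, C)`. -/
def uA (d : DownT n) : UpT n :=
  ⟨(⟨(d.1.1 : ℕ) - 1, by have := d.1.1.isLt; omega⟩, ⟨(d.1.2 : ℕ), d.1.2.isLt⟩), by
    show (d.1.2 : ℕ) ≤ (d.1.1 : ℕ) - 1
    have h1 : (d.1.2 : ℕ) < (d.1.1 : ℕ) := d.2; omega⟩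

@[simp] lemma uA_r (d : DownT n) : ((uA d).1.1 : ℕ) = (d.1.1 : ℕ) - 1 := rfl
@[simp] lemma uA_c (d : DownT n) : ((uA d).1.2 : ℕ) = (d.1.2 : ℕ) := rfl

lemma redge_ne {x y : RVert n} (h : REdge x y) : (x.1.1 : ℕ) ≠ 0 := by
  have := h.1; omega

lemma vA_dOf (x : RVert n) (h : (x.1.1 : ℕ) ≠ 0) : vA (dOf x h) = x := by
  have hx := x.2
  exact rvert_ext (by simp; omega) (by simp) (by simp)

lemma dOf_vA (d : DownT n) (h : ((vA d).1.1 : ℕ) ≠ 0) : dOf (vA d) h = d := by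
  have h1 : (d.1.2 : ℕ) < (d.1.1 : ℕ) := d.2
  exact pair_ext (by simp; omega) (by simp)

lemma vA_inj {d d' : DownT n} (h : vA d = vA d') : d = d' := by
  have := dOf_vA d (vA_ne d)
  have h2 := dOf_vA d' (vA_ne d')
  rw [← this, ← h2]
  congr 1

lemma adj_of_redge {x y : RVert n} (h : REdge x y) :
    AdjDU (dOf x (redge_ne h)) (uOf y) := by
  obtain ⟨h1, h2 | h2⟩ := h <;>
    · unfold AdjDU
      simp only [uOf_r, uOf_c, dOf_r, dOf_c]
      omega

lemma redge_of_adj {d : DownT n} {u : UpT n} (h : AdjDU d u)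
    (hr : (u.1.1 : ℕ) = (d.1.1 : ℕ)) : ∃ y, REdge (vA d) y ∧ uOf y = u := by
  have hR := d.1.1.isLt
  have hC : (d.1.2 : ℕ) < (d.1.1 : ℕ) := d.2
  rcases h with ⟨h1, h2⟩ | ⟨h1, h2⟩ | ⟨h1, h2⟩
  · -- u is the left triangle (R, C): y = (n-1-R, C, R-C)
    refine ⟨⟨(⟨n - 1 - (d.1.1 : ℕ), by omega⟩, ⟨(d.1.2 : ℕ), d.1.2.isLt⟩,
        ⟨(d.1.1 : ℕ) - (d.1.2 : ℕ), by omega⟩), by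
          show n - 1 - (d.1.1 : ℕ) + (d.1.2 : ℕ) + ((d.1.1 : ℕ) - (d.1.2 : ℕ)) = n - 1
          omega⟩, ⟨?_, Or.inr ⟨?_, ?_⟩⟩, ?_⟩
    · show n - 1 - (d.1.1 : ℕ) + 1 = n - (d.1.1 : ℕ); omega
    · rfl
    · show (d.1.1 : ℕ) - (d.1.2 : ℕ) = (d.1.1 : ℕ) - 1 - (d.1.2 : ℕ) + 1; omega
    · exact pair_ext (by simp only [uOf_r]; show (d.1.2:ℕ) + ((d.1.1:ℕ) - (d.1.2:ℕ)) = (u.1.1:ℕ); omega)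
        (by simp only [uOf_c]; show (d.1.2 : ℕ) = (u.1.2 : ℕ); omega)
  · -- u is the right triangle (R, C+1): y = (n-1-R, C+1, R-C-1)
    refine ⟨⟨(⟨n - 1 - (d.1.1 : ℕ), by omega⟩, ⟨(d.1.2 : ℕ) + 1, by omega⟩,
        ⟨(d.1.1 : ℕ) - 1 - (d.1.2 : ℕ), by omega⟩), by
          show n - 1 - (d.1.1 : ℕ) + ((d.1.2 : ℕ) + 1) + ((d.1.1 : ℕ) - 1 - (d.1.2 : ℕ)) = n - 1
          omega⟩, ⟨?_, Or.inl ⟨?_, ?_⟩⟩, ?_⟩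
    · show n - 1 - (d.1.1 : ℕ) + 1 = n - (d.1.1 : ℕ); omega
    · show (d.1.2 : ℕ) + 1 = (d.1.2 : ℕ) + 1; rfl
    · rfl
    · exact pair_ext
        (by simp only [uOf_r]; show (d.1.2:ℕ) + 1 + ((d.1.1:ℕ) - 1 - (d.1.2:ℕ)) = (u.1.1:ℕ); omega)
        (by simp only [uOf_c]; show (d.1.2 : ℕ) + 1 = (u.1.2 : ℕ); omega)
  · omega

/-- the routing associated with a tiling. -/
abbrev Ef (f : DownT n → UpT n) (x y : RVert n) : Prop :=
  ∃ h : REdge x y, f (dOf x (redge_ne h)) = uOf y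

lemma routing_Ef {f : DownT n → UpT n} (hf : IsLozengeTiling f) : IsRouting (Ef f) := by
  refine ⟨fun x y h => h.1, ?_, ?_, ?_⟩
  · rintro x y z ⟨h1, e1⟩ ⟨h2, e2⟩
    exact uOf_inj (e1.symm.trans e2)
  · rintro x y z ⟨h1, e1⟩ ⟨h2, e2⟩
    exact dOf_inj (hf.1 (e1.trans e2.symm))
  · rintro x hx ⟨y, hy, hval⟩
    rcases hf.2 (dOf x hx) with h | h | h
    · obtain ⟨z, hz, hu⟩ := redge_of_adj (Or.inl h) h.1
      rw [vA_dOf] at hz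
      exact ⟨z, hz, hu.symm⟩
    · obtain ⟨z, hz, hu⟩ := redge_of_adj (Or.inr (Or.inl h)) h.1
      rw [vA_dOf] at hz
      exact ⟨z, hz, hu.symm⟩
    · exfalso
      have h1 := h.1
      have h2 := h.2
      simp only [dOf_r, dOf_c] at h1 h2
      have hfd : f (dOf x hx) = uOf x :=
        pair_ext (by simp only [uOf_r]; omega) (by simp only [uOf_c]; omega)
      have heq : dOf x hx = dOf y (redge_ne hy) := hf.1 (hfd.trans hval.symm)
      have hrow : ((dOf x hx).1.1 : ℕ) = ((dOf y (redge_ne hy)).1.1 : ℕ) := by rw [heq]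
      simp only [dOf_r] at hrow
      obtain ⟨a1, a2 | a2⟩ := hy <;> omega

/-- the tiling associated with a routing. -/
noncomputable def gE (E : RVert n → RVert n → Prop) (d : DownT n) : UpT n :=
  if h : ∃ y, E (vA d) y then uOf (Classical.choose h) else uA d

lemma mixed_absurd {E : RVert n → RVert n → Prop} (hE : IsRouting E) {d d' : DownT n}
    (h : ∃ y, E (vA d) y) (h' : ¬∃ y, E (vA d') y)
    (heq : uOf (Classical.choose h) = uA d') : False := by
  set y := Classical.choose h with hy
  have spec : E (vA d) y := Classical.choose_spec h
  have h1 : ((uOf y).1.1 : ℕ) = ((uA d').1.1 : ℕ) := by rw [heq]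
  have h2 : ((uOf y).1.2 : ℕ) = ((uA d').1.2 : ℕ) := by rw [heq]
  simp only [uOf_r, uOf_c, uA_r, uA_c] at h1 h2
  have hys := y.2
  have hR' := d'.1.1.isLt
  have hC' : (d'.1.2 : ℕ) < (d'.1.1 : ℕ) := d'.2
  have hyv : y = vA d' := rvert_ext (by simp; omega) (by simp; omega) (by simp; omega)
  refine h' ?_
  exact hE.2.2.2 (vA d') (vA_ne d') ⟨vA d, hyv ▸ spec⟩

lemma tiling_gE {E : RVert n → RVert n → Prop} (hE : IsRouting E) :
    IsLozengeTiling (gE E) := by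
  constructor
  · intro d d' heq
    by_cases h : ∃ y, E (vA d) y <;> by_cases h' : ∃ y, E (vA d') y
    · simp only [gE, dif_pos h, dif_pos h'] at heq
      have := uOf_inj heq
      have spec : E (vA d) (Classical.choose h) := Classical.choose_spec h
      have spec' : E (vA d') (Classical.choose h') := Classical.choose_spec h'
      rw [this] at spec
      exact vA_inj (hE.2.2.1 _ _ _ spec spec')
    · exfalso
      simp only [gE, dif_pos h, dif_neg h'] at heq
      exact mixed_absurd hE h h' heq
    · exfalso
      simp only [gE, dif_neg h, dif_pos h'] at heq
      exact mixed_absurd hE h' h heq.symm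
    · simp only [gE, dif_neg h, dif_neg h'] at heq
      have h1 : ((uA d).1.1 : ℕ) = ((uA d').1.1 : ℕ) := by rw [heq]
      have h2 : ((uA d).1.2 : ℕ) = ((uA d').1.2 : ℕ) := by rw [heq]
      simp only [uA_r, uA_c] at h1 h2
      have hC : (d.1.2 : ℕ) < (d.1.1 : ℕ) := d.2
      have hC' : (d'.1.2 : ℕ) < (d'.1.1 : ℕ) := d'.2
      exact pair_ext (by omega) (by omega)
  · intro d
    by_cases h : ∃ y, E (vA d) y
    · simp only [gE, dif_pos h]
      have spec : E (vA d) (Classical.choose h) := Classical.choose_spec h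
      have hr := hE.1 _ _ spec
      have := adj_of_redge hr
      rwa [dOf_vA] at this
    · simp only [gE, dif_neg h]
      have hC : (d.1.2 : ℕ) < (d.1.1 : ℕ) := d.2
      exact Or.inr (Or.inr ⟨by simp; omega, by simp⟩)

lemma gE_Ef {f : DownT n → UpT n} (hf : IsLozengeTiling f) : gE (Ef f) = f := by
  funext d
  have hC : (d.1.2 : ℕ) < (d.1.1 : ℕ) := d.2
  by_cases hrow : ((f d).1.1 : ℕ) = (d.1.1 : ℕ)
  · -- f d is the left or right triangle of d: there is an outgoing edge
    obtain ⟨y, hry, huy⟩ := redge_of_adj (hf.2 d) hrow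
    have hEf : Ef f (vA d) y := ⟨hry, by rw [dOf_vA]; exact huy.symm⟩
    have hex : ∃ y, Ef f (vA d) y := ⟨y, hEf⟩
    simp only [gE, dif_pos hex]
    obtain ⟨hr', hval'⟩ := Classical.choose_spec hex
    have h0 : f d = f (dOf (vA d) (redge_ne hr')) := by rw [dOf_vA]
    exact (h0.trans hval').symm
  · -- f d is the triangle above d: no outgoing edge
    have h : ((f d).1.1 : ℕ) + 1 = (d.1.1 : ℕ) ∧ ((f d).1.2 : ℕ) = (d.1.2 : ℕ) := by
      rcases hf.2 d with h | h | h
      · exact absurd h.1 hrow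
      · exact absurd h.1 hrow
      · exact h
    have hno : ¬∃ y, Ef f (vA d) y := by
      rintro ⟨y, hr, hval⟩
      rw [dOf_vA] at hval
      have h1 : ((f d).1.1 : ℕ) = ((uOf y).1.1 : ℕ) := by rw [hval]
      simp only [uOf_r] at h1
      have hys := y.2
      have hy1 := hr.1
      simp only [vA_1] at hy1
      have := d.1.1.isLt
      omega
    simp only [gE, dif_neg hno]
    refine pair_ext ?_ ?_
    · simp only [uA_r]; omega
    · simp only [uA_c]; omega

lemma Ef_gE {E : RVert n → RVert n → Prop} (hE : IsRouting E) : Ef (gE E) = E := by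
  funext x y
  apply propext
  constructor
  · rintro ⟨hr, hval⟩
    by_cases h : ∃ z, E x z
    · have hcond : ∃ z, E (vA (dOf x (redge_ne hr))) z := by rw [vA_dOf]; exact h
      simp only [gE, dif_pos hcond] at hval
      have spec : E (vA (dOf x (redge_ne hr))) (Classical.choose hcond) :=
        Classical.choose_spec hcond
      generalize hgen : Classical.choose hcond = c at spec hval
      rw [vA_dOf] at spec
      rwa [uOf_inj hval] at spec
    · exfalso
      have hcond : ¬∃ z, E (vA (dOf x (redge_ne hr))) z := by rw [vA_dOf]; exact h
      simp only [gE, dif_neg hcond] at hval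
      have h1 : ((uA (dOf x (redge_ne hr))).1.1 : ℕ) = ((uOf y).1.1 : ℕ) := by rw [hval]
      simp only [uA_r, uOf_r, dOf_r] at h1
      obtain ⟨a1, a2 | a2⟩ := hr <;> omega
  · intro hxy
    have hr := hE.1 x y hxy
    refine ⟨hr, ?_⟩
    have hcond : ∃ z, E (vA (dOf x (redge_ne hr))) z := by rw [vA_dOf]; exact ⟨y, hxy⟩
    simp only [gE, dif_pos hcond]
    have spec : E (vA (dOf x (redge_ne hr))) (Classical.choose hcond) :=
      Classical.choose_spec hcond
    generalize hgen : Classical.choose hcond = c at spec ⊢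
    rw [vA_dOf] at spec
    rw [hE.2.1 x c y spec hxy]

end Stmt15Aux

set_option maxHeartbeats 2000000 in
/-- There is a bijection between the lozenge tilings of `n·Δ_2` and the
vertex-disjoint routings to the bottom row of the directed graph `G_n`. -/
theorem stmt15 (n : ℕ) :
    Nonempty ({f : DownT n → UpT n // IsLozengeTiling f} ≃
      {E : RVert n → RVert n → Prop // IsRouting E}) :=
  ⟨{ toFun := fun f => ⟨Ef f.1, routing_Ef f.2⟩
     invFun := fun E => ⟨gE E.1, tiling_gE E.2⟩
     left_inv := fun f => Subtype.ext (gE_Ef f.2)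
     right_inv := fun E => Subtype.ext (Ef_gE E.2) }⟩
end

section
/- Let σ be an acyclic system of permutations on the edges of n·Δ_{d−1}, and let T(σ) be its n×n table of positions: T_{ii} = the full word w_1...w_d, and for j ≠ i, T_{ij} = w_a where a is the unique source of G_{ij}(σ). For distinct a,b ∈ [d], define the directed graph H_{ab}(σ) on [n] with an edge i→j whenever there exists a column ℓ such that w_a appears in T_{iℓ} and w_b appears in T_{jℓ}. Then H_{ab}(σ) is a subgraph of the acyclic tournament on [n] corresponding to σ_{ab} (i.e., i→j in H_{ab}(σ) implies i precedes j in σ_{ab}); in particular, H_{ab}(σ) is acyclic. -/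
open scoped Classical

/-- The table of positions `T(σ)` of an acyclic system: the diagonal entry `T i i` is the
full word `w_1 ... w_d`, and for `j ≠ i` the entry `T i j` is the singleton consisting of
the unique source of `G_{ij}(σ)`. -/
noncomputable def tableT {n d : ℕ} (σ : Fin d → Fin d → Equiv.Perm (Fin n))
    (i j : Fin n) : Finset (Fin d) :=
  if i = j then Finset.univ else Finset.univ.filter (IsUniqueSource (tournG σ i j))

/-- The digraph `H_{ab}(σ)` on `[n]`: `i → j` (for `i ≠ j`) whenever there is a column `ℓ`
such that `w_a` appears in `T i ℓ` and `w_b` appears in `T j ℓ`. -/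
noncomputable def Hrel {n d : ℕ} (σ : Fin d → Fin d → Equiv.Perm (Fin n))
    (a b : Fin d) (i j : Fin n) : Prop :=
  i ≠ j ∧ ∃ ℓ : Fin n, a ∈ tableT σ i ℓ ∧ b ∈ tableT σ j ℓ

lemma precedes_rev {n d : ℕ} {σ : Fin d → Fin d → Equiv.Perm (Fin n)}
    (hs : IsSystem σ) {a b : Fin d} (hab : a ≠ b) (i j : Fin n) :
    precedes (σ b a) i j ↔ precedes (σ a b) j i := by
  have hsymm : ∀ x, (σ b a).symm x = ((σ a b).symm x).rev := by
    intro x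
    have : σ b a (((σ a b).symm x).rev) = x := by
      rw [hs a b hab, Fin.rev_rev, Equiv.apply_symm_apply]
    exact (Equiv.symm_apply_eq _).mpr this.symm
  unfold precedes
  rw [hsymm, hsymm, Fin.rev_lt_rev]

/-- For an acyclic system of permutations `σ` and distinct `a, b ∈ [d]`,
the digraph `H_{ab}(σ)` is a subgraph of the acyclic tournament on `[n]` corresponding to
`σ_{ab}`: an edge `i → j` of `H_{ab}(σ)` implies that `i` precedes `j` in `σ_{ab}`.
In particular `H_{ab}(σ)` is acyclic. -/
theorem stmt17 (n d : ℕ) (σ : Fin d → Fin d → Equiv.Perm (Fin n))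
    (hσ : IsAcyclicSystem σ) (a b : Fin d) (hab : a ≠ b) :
    (∀ i j : Fin n, Hrel σ a b i j → precedes (σ a b) i j) ∧
    IsAcyclicRel (Hrel σ a b) := by
  obtain ⟨hs, _⟩ := hσ
  have tot : ∀ (i j : Fin n), i ≠ j →
      precedes (σ a b) i j ∨ precedes (σ a b) j i := by
    intro i j hij
    rcases lt_or_gt_of_ne (fun h => hij ((σ a b).symm.injective h)) with h | h
    · exact Or.inl h
    · exact Or.inr h
  have main : ∀ i j : Fin n, Hrel σ a b i j → precedes (σ a b) i j := by
    rintro i j ⟨hij, ℓ, ha, hb⟩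
    by_cases hiℓ : i = ℓ
    · -- column ℓ = i : use that b is the source of G_{j i}
      subst hiℓ
      have hji : j ≠ i := Ne.symm hij
      rw [tableT, if_neg hji, Finset.mem_filter] at hb
      have hsrc := hb.2.1 a
      rw [tournG] at hsrc
      push_neg at hsrc
      have : ¬ precedes (σ a b) j i := hsrc hab
      exact (tot i j hij).resolve_right this
    · by_cases hjℓ : j = ℓ
      · -- column ℓ = j : use that a is the source of G_{i j}
        subst hjℓ
        rw [tableT, if_neg hij, Finset.mem_filter] at ha
        have hsrc := ha.2.1 b
        rw [tournG] at hsrc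
        push_neg at hsrc
        have : ¬ precedes (σ b a) i j := hsrc hab.symm
        rw [precedes_rev hs hab] at this
        exact (tot i j hij).resolve_right this
      · -- column ℓ ∉ {i, j}
        rw [tableT, if_neg hiℓ, Finset.mem_filter] at ha
        rw [tableT, if_neg hjℓ, Finset.mem_filter] at hb
        have h1 := ha.2.1 b
        rw [tournG] at h1
        push_neg at h1
        have h1' : ¬ precedes (σ b a) i ℓ := h1 hab.symm
        rw [precedes_rev hs hab] at h1'
        have hil : precedes (σ a b) i ℓ := (tot i ℓ hiℓ).resolve_right h1'
        have h2 := hb.2.1 a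
        rw [tournG] at h2
        push_neg at h2
        have h2' : ¬ precedes (σ a b) j ℓ := h2 hab
        have hlj : precedes (σ a b) ℓ j := (tot j ℓ hjℓ).resolve_left h2'
        exact lt_trans hil hlj
  refine ⟨main, ?_⟩
  intro i hi
  have htr : Transitive (precedes (σ a b)) := fun x y z hxy hyz => lt_trans hxy hyz
  have := Relation.TransGen.mono main i i hi
  rw [@Relation.transGen_eq_self _ (precedes (σ a b)) ⟨htr⟩] at this
  exact lt_irrefl _ this
end

section
/- Every collection of three spread out simplex positions in 3·Δ_{d−1} is achievable as the set of simplex positions of some acyclic system of permutations on the edges of 3·Δ_{d−1}. -/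
open scoped Classical

set_option synthInstance.maxSize 1000
set_option maxHeartbeats 1000000

/-! ### Selection conditions -/

def selOK {α : Type*} [DecidableEq α] (A B C E F G : α) : Prop :=
  A ≠ C ∧ E ≠ G ∧ B ≠ F ∧ (A = E → B = A) ∧ (C = G → F = C) ∧
  (A ≠ E → C ≠ G → A ≠ G → (B ≠ G ∧ F ≠ A)) ∧
  (A ≠ E → C ≠ G → E ≠ C → (B ≠ C ∧ F ≠ E))

instance selOK.dec {α : Type*} [DecidableEq α] (A B C E F G : α) :
    Decidable (selOK A B C E F G) := by
  unfold selOK; infer_instance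

def corePQ (p q : Fin 3 → ℕ) : Prop :=
  (∀ i j : Fin 3, i ≠ j → ¬((p i = p j ∧ q i = q j) ∨ (p i = q j ∧ q i = p j))) →
  (∀ t : Fin 3, ∃ i : Fin 3, p t ≠ p i ∧ p t ≠ q i) →
  (∀ t : Fin 3, ∃ i : Fin 3, q t ≠ p i ∧ q t ≠ q i) →
  ∃ i0 i1 i2 : Fin 3, i0 ≠ i1 ∧ i0 ≠ i2 ∧ i1 ≠ i2 ∧ ∃ bA bC bF : Bool,
    selOK (cond bA (p i0) (q i0)) (cond bA (q i0) (p i0))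
          (cond bC (p i1) (q i1)) (cond bC (q i1) (p i1))
          (cond bF (p i2) (q i2)) (cond bF (q i2) (p i2))

instance corePQ.dec (p q : Fin 3 → ℕ) : Decidable (corePQ p q) := by
  unfold corePQ; infer_instance

set_option maxRecDepth 100000 in
theorem coreN_all : ∀ n < 720, corePQ ![0, n/2%3, n/24%5] ![n%2, n/6%4, n/120%6] := by
  decide

/-! ### The six words on three letters -/

def w012 : Equiv.Perm (Fin 3) := 1
def w021 : Equiv.Perm (Fin 3) := Equiv.swap 1 2
def w102 : Equiv.Perm (Fin 3) := Equiv.swap 0 1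
def w210 : Equiv.Perm (Fin 3) := Equiv.swap 0 2
def w120 : Equiv.Perm (Fin 3) := ⟨![1,2,0], ![2,0,1], by decide, by decide⟩
def w201 : Equiv.Perm (Fin 3) := ⟨![2,0,1], ![1,2,0], by decide, by decide⟩

def mk3 : Bool → Bool → Bool → Equiv.Perm (Fin 3)
  | true, true, true => w012
  | true, true, false => w021
  | false, true, true => w102
  | false, false, true => w120
  | true, false, false => w201
  | false, false, false => w210
  | true, false, true => w012
  | false, true, false => w210

lemma mk3_rev : ∀ p q r : Bool, ∀ k : Fin 3, mk3 (!p) (!q) (!r) k = mk3 p q r k.rev := by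
  decide

lemma precedes_not {n : ℕ} (u : Equiv.Perm (Fin n)) {i j : Fin n} (hij : i ≠ j) :
    precedes u j i ↔ ¬ precedes u i j := by
  have hne : (u.symm i : ℕ) ≠ (u.symm j : ℕ) := by
    simpa [Fin.ext_iff] using fun h => hij (u.symm.injective (Fin.ext h))
  unfold precedes
  rw [Fin.lt_def, Fin.lt_def]
  omega

/-! ### Rank functions -/

def phiF {d : ℕ} (A C E G : Fin d) (y : Fin d) : ℤ :=
  if y = E then -2 else if y = C then -1 else if y = G then (d:ℤ)+2
  else if y = A then (d:ℤ)+1 else (y:ℤ)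

def psiF {d : ℕ} (C G : Fin d) (y : Fin d) : ℤ :=
  if y = G then -2 else if y = C then -1 else (y:ℤ)

def r01f {d : ℕ} (A C E G : Fin d) (y : Fin d) : ℤ :=
  if y = A then (d:ℤ)+10 else if y = C then -((d:ℤ)+10) else phiF A C E G y

def r12f {d : ℕ} (A C E G : Fin d) (y : Fin d) : ℤ :=
  if y = E then (d:ℤ)+10 else if y = G then -((d:ℤ)+10) else -phiF A C E G y

def r02f {d : ℕ} (B C F G : Fin d) (y : Fin d) : ℤ :=
  if y = B then (d:ℤ)+10 else if y = F then -((d:ℤ)+10) else psiF C G y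

section ranks

variable {d : ℕ} {A B C E F G : Fin d}

lemma phiF_bounds (y : Fin d) : -2 ≤ phiF A C E G y ∧ phiF A C E G y ≤ (d:ℤ)+2 := by
  have := y.is_lt
  unfold phiF; split_ifs <;> omega

lemma phiF_inj {a b : Fin d} (hab : a ≠ b) : phiF A C E G a ≠ phiF A C E G b := by
  have := a.is_lt; have := b.is_lt
  unfold phiF
  split_ifs <;> simp_all only [Fin.ext_iff, ne_eq, not_true, not_false_iff] <;> omega

lemma psiF_bounds (y : Fin d) : -2 ≤ psiF C G y ∧ psiF C G y ≤ (d:ℤ) - 1 := by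
  have := y.is_lt
  unfold psiF; split_ifs <;> omega

lemma psiF_inj {a b : Fin d} (hab : a ≠ b) : psiF C G a ≠ psiF C G b := by
  have := a.is_lt; have := b.is_lt
  unfold psiF
  split_ifs <;> simp_all only [Fin.ext_iff, ne_eq, not_true, not_false_iff] <;> omega

lemma r01_A : r01f A C E G A = (d:ℤ)+10 := by unfold r01f; rw [if_pos rfl]
lemma r01_C (hAC : A ≠ C) : r01f A C E G C = -((d:ℤ)+10) := by
  unfold r01f; rw [if_neg (Ne.symm hAC), if_pos rfl]
lemma r01_mid {y : Fin d} (h1 : y ≠ A) (h2 : y ≠ C) : r01f A C E G y = phiF A C E G y := by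
  unfold r01f; rw [if_neg h1, if_neg h2]
lemma r12_E : r12f A C E G E = (d:ℤ)+10 := by unfold r12f; rw [if_pos rfl]
lemma r12_G (hEG : E ≠ G) : r12f A C E G G = -((d:ℤ)+10) := by
  unfold r12f; rw [if_neg (Ne.symm hEG), if_pos rfl]
lemma r12_mid {y : Fin d} (h1 : y ≠ E) (h2 : y ≠ G) : r12f A C E G y = -phiF A C E G y := by
  unfold r12f; rw [if_neg h1, if_neg h2]
lemma r02_B : r02f B C F G B = (d:ℤ)+10 := by unfold r02f; rw [if_pos rfl]
lemma r02_F (hBF : B ≠ F) : r02f B C F G F = -((d:ℤ)+10) := by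
  unfold r02f; rw [if_neg (Ne.symm hBF), if_pos rfl]
lemma r02_mid {y : Fin d} (h1 : y ≠ B) (h2 : y ≠ F) : r02f B C F G y = psiF C G y := by
  unfold r02f; rw [if_neg h1, if_neg h2]

lemma r01_top {y : Fin d} (h : y ≠ A) : r01f A C E G y < r01f A C E G A := by
  have hb := phiF_bounds (A := A) (C := C) (E := E) (G := G) y
  rw [r01_A]; unfold r01f; rw [if_neg h]; split_ifs <;> omega
lemma r01_bot (hAC : A ≠ C) {y : Fin d} (h : y ≠ C) : r01f A C E G C < r01f A C E G y := by
  have hb := phiF_bounds (A := A) (C := C) (E := E) (G := G) y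
  rw [r01_C hAC]; unfold r01f
  split_ifs <;> first | omega | exact absurd ‹y = C› h
lemma r12_top {y : Fin d} (h : y ≠ E) : r12f A C E G y < r12f A C E G E := by
  have hb := phiF_bounds (A := A) (C := C) (E := E) (G := G) y
  rw [r12_E]; unfold r12f; rw [if_neg h]; split_ifs <;> omega
lemma r12_bot (hEG : E ≠ G) {y : Fin d} (h : y ≠ G) : r12f A C E G G < r12f A C E G y := by
  have hb := phiF_bounds (A := A) (C := C) (E := E) (G := G) y
  rw [r12_G hEG]; unfold r12f
  split_ifs <;> first | omega | exact absurd ‹y = G› h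
lemma r02_top {y : Fin d} (h : y ≠ B) : r02f B C F G y < r02f B C F G B := by
  have hb := psiF_bounds (C := C) (G := G) y
  rw [r02_B]; unfold r02f; rw [if_neg h]; split_ifs <;> omega
lemma r02_bot (hBF : B ≠ F) {y : Fin d} (h : y ≠ F) : r02f B C F G F < r02f B C F G y := by
  have hb := psiF_bounds (C := C) (G := G) y
  rw [r02_F hBF]; unfold r02f
  split_ifs <;> first | omega | exact absurd ‹y = F› h

lemma r01_inj (hAC : A ≠ C) {a b : Fin d} (hab : a ≠ b) :
    r01f A C E G a ≠ r01f A C E G b := by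
  by_cases ha : a = A
  · have hb : b ≠ A := by rw [← ha]; exact Ne.symm hab
    have := r01_top (C := C) (E := E) (G := G) hb
    rw [ha]; omega
  · by_cases hb : b = A
    · have := r01_top (C := C) (E := E) (G := G) ha
      rw [hb]; omega
    · by_cases ha2 : a = C
      · have hb2 : b ≠ C := by rw [← ha2]; exact Ne.symm hab
        have := r01_bot (E := E) (G := G) hAC hb2
        rw [ha2]; omega
      · by_cases hb2 : b = C
        · have := r01_bot (E := E) (G := G) hAC ha2
          rw [hb2]; omega
        · rw [r01_mid ha ha2, r01_mid hb hb2]; exact phiF_inj hab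

lemma r12_inj (hEG : E ≠ G) {a b : Fin d} (hab : a ≠ b) :
    r12f A C E G a ≠ r12f A C E G b := by
  by_cases ha : a = E
  · have hb : b ≠ E := by rw [← ha]; exact Ne.symm hab
    have := r12_top (A := A) (C := C) (G := G) hb
    rw [ha]; omega
  · by_cases hb : b = E
    · have := r12_top (A := A) (C := C) (G := G) ha
      rw [hb]; omega
    · by_cases ha2 : a = G
      · have hb2 : b ≠ G := by rw [← ha2]; exact Ne.symm hab
        have := r12_bot (A := A) (C := C) hEG hb2
        rw [ha2]; omega
      · by_cases hb2 : b = G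
        · have := r12_bot (A := A) (C := C) hEG ha2
          rw [hb2]; omega
        · rw [r12_mid ha ha2, r12_mid hb hb2]
          have := phiF_inj (A := A) (C := C) (E := E) (G := G) hab
          omega

lemma r02_inj (hBF : B ≠ F) {a b : Fin d} (hab : a ≠ b) :
    r02f B C F G a ≠ r02f B C F G b := by
  by_cases ha : a = B
  · have hb : b ≠ B := by rw [← ha]; exact Ne.symm hab
    have := r02_top (C := C) (F := F) (G := G) hb
    rw [ha]; omega
  · by_cases hb : b = B
    · have := r02_top (C := C) (F := F) (G := G) ha
      rw [hb]; omega
    · by_cases ha2 : a = F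
      · have hb2 : b ≠ F := by rw [← ha2]; exact Ne.symm hab
        have := r02_bot (C := C) (G := G) hBF hb2
        rw [ha2]; omega
      · by_cases hb2 : b = F
        · have := r02_bot (C := C) (G := G) hBF ha2
          rw [hb2]; omega
        · rw [r02_mid ha ha2, r02_mid hb hb2]; exact psiF_inj hab

lemma phiF_E : phiF A C E G E = -2 := by unfold phiF; rw [if_pos rfl]
lemma phiF_C (h : C ≠ E) : phiF A C E G C = -1 := by unfold phiF; rw [if_neg h, if_pos rfl]
lemma phiF_G (h1 : G ≠ E) (h2 : G ≠ C) : phiF A C E G G = (d:ℤ)+2 := by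
  unfold phiF; rw [if_neg h1, if_neg h2, if_pos rfl]
lemma phiF_A (h1 : A ≠ E) (h2 : A ≠ C) (h3 : A ≠ G) : phiF A C E G A = (d:ℤ)+1 := by
  unfold phiF; rw [if_neg h1, if_neg h2, if_neg h3, if_pos rfl]
lemma phiF_ne_E {y : Fin d} (h : y ≠ E) : -1 ≤ phiF A C E G y := by
  have := y.is_lt; unfold phiF; split_ifs <;> first | omega | exact absurd ‹y = E› h
lemma phiF_ne_G {y : Fin d} (h : y ≠ G) : phiF A C E G y ≤ (d:ℤ)+1 := by
  have := y.is_lt; unfold phiF; split_ifs <;> first | omega | exact absurd ‹y = G› h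
lemma psiF_G : psiF C G G = -2 := by unfold psiF; rw [if_pos rfl]
lemma psiF_C (h : C ≠ G) : psiF C G C = -1 := by unfold psiF; rw [if_neg h, if_pos rfl]
lemma psiF_mid {y : Fin d} (h1 : y ≠ G) (h2 : y ≠ C) : psiF C G y = (y:ℤ) := by
  unfold psiF; rw [if_neg h1, if_neg h2]

lemma compat (hsel : selOK A B C E F G) :
    ∀ a b : Fin d, r01f A C E G b < r01f A C E G a →
      r12f A C E G b < r12f A C E G a → r02f B C F G b < r02f B C F G a := by
  obtain ⟨hAC, hEG, hBF, hABe, hCFc, hdd, hee⟩ := hsel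
  intro a b h1 h2
  have hab : a ≠ b := by intro h; rw [h] at h1; exact absurd h1 (lt_irrefl _)
  have hbA : b ≠ A := by
    intro h
    have haA2 : a ≠ A := by rw [← h]; exact hab
    rw [h] at h1
    exact absurd h1 (lt_asymm (r01_top (C := C) (E := E) (G := G) haA2))
  have haC : a ≠ C := by
    intro h
    have hbC2 : b ≠ C := by rw [← h]; exact Ne.symm hab
    rw [h] at h1
    exact absurd h1 (lt_asymm (r01_bot (E := E) (G := G) hAC hbC2))
  have hbE : b ≠ E := by
    intro h
    have haE2 : a ≠ E := by rw [← h]; exact hab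
    rw [h] at h2
    exact absurd h2 (lt_asymm (r12_top (A := A) (C := C) (G := G) haE2))
  have haG : a ≠ G := by
    intro h
    have hbG2 : b ≠ G := by rw [← h]; exact Ne.symm hab
    rw [h] at h2
    exact absurd h2 (lt_asymm (r12_bot (A := A) (C := C) hEG hbG2))
  by_cases haA : a = A
  · by_cases hAE : A = E
    · -- B = A = a, so a is the top of r02
      have hBA : B = A := hABe hAE
      have hbB : b ≠ B := by rw [hBA, ← haA]; exact Ne.symm hab
      have h3 := r02_top (C := C) (F := F) (G := G) hbB
      rw [haA, ← hBA]; exact h3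
    · have hAG : A ≠ G := by rw [← haA]; exact haG
      have hbG : b = G := by
        by_contra hbG
        have e1 : r12f A C E G A = -((d:ℤ)+1) := by
          rw [r12_mid hAE hAG, phiF_A hAE hAC hAG]
        rw [haA, e1] at h2
        rw [r12_mid hbE hbG] at h2
        have := phiF_ne_G (A := A) (C := C) (E := E) hbG
        omega
      by_cases hCG : C = G
      · have hFC : F = C := hCFc hCG
        have hGF : G = F := by rw [hFC]; exact hCG.symm
        have haF : a ≠ F := by rw [← hGF]; exact haG
        have hbF : b = F := by rw [hbG]; exact hGF
        rw [hbF]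
        exact r02_bot (C := C) (G := G) hBF haF
      · obtain ⟨hBG, hFA⟩ := hdd hAE hCG hAG
        rw [hbG, haA]
        by_cases hAB : A = B
        · rw [hAB]; exact r02_top (Ne.symm hBG)
        · have e3 : r02f B C F G A = ((A:ℕ):ℤ) := by
            rw [r02_mid hAB (Ne.symm hFA), psiF_mid hAG (fun h => hAC h)]
          by_cases hGF : G = F
          · have e4 : r02f B C F G G = r02f B C F G F := congrArg _ hGF
            rw [e4, r02_F hBF, e3]
            have := A.is_lt; omega
          · rw [r02_mid (Ne.symm hBG) hGF, psiF_G, e3]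
            have := A.is_lt; omega
  · by_cases hbC : b = C
    · by_cases hCG : C = G
      · have hFC : F = C := hCFc hCG
        have haF : a ≠ F := by rw [hFC]; exact haC
        have hbF : b = F := by rw [hbC]; exact hFC.symm
        rw [hbF]
        exact r02_bot (C := C) (G := G) hBF haF
      · have hCE : C ≠ E := by rw [← hbC]; exact hbE
        have haE : a = E := by
          by_contra haE
          rw [hbC, r12_mid hCE hCG, phiF_C hCE] at h2
          rw [r12_mid haE haG] at h2
          have := phiF_ne_E (A := A) (C := C) (G := G) haE
          omega
        have hAE : A ≠ E := by rw [← haE]; exact Ne.symm haA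
        have hEC : E ≠ C := by rw [← haE]; exact haC
        obtain ⟨hBC, hFE⟩ := hee hAE hCG hEC
        rw [hbC, haE]
        by_cases hEB : E = B
        · rw [hEB]; exact r02_top (Ne.symm hBC)
        · have e7 : r02f B C F G E = ((E:ℕ):ℤ) := by
            rw [r02_mid hEB (Ne.symm hFE), psiF_mid hEG hEC]
          by_cases hCF : C = F
          · have e8 : r02f B C F G C = r02f B C F G F := congrArg _ hCF
            rw [e8, r02_F hBF, e7]
            have := E.is_lt; omega
          · rw [r02_mid (Ne.symm hBC) hCF, psiF_C hCG, e7]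
            have := E.is_lt; omega
    · exfalso
      rw [r01_mid haA haC, r01_mid hbA hbC] at h1
      by_cases haE : a = E
      · rw [haE, phiF_E] at h1
        have := phiF_ne_E (A := A) (C := C) (G := G) hbE
        omega
      · by_cases hbG : b = G
        · have hGC : G ≠ C := by rw [← hbG]; exact hbC
          rw [hbG, phiF_G (Ne.symm hEG) hGC] at h1
          have := phiF_ne_G (A := A) (C := C) (E := E) haG
          omega
        · rw [r12_mid haE haG, r12_mid hbE hbG] at h2
          omega

end ranks
/-! ### The system of permutations -/

lemma mk3_01 : ∀ p q r : Bool, precedes (mk3 p q r) 0 1 ↔ p = true := by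
  unfold precedes; decide
lemma mk3_02 : ∀ p q r : Bool, (p && !q && r) = false → (!p && q && !r) = false →
    (precedes (mk3 p q r) 0 2 ↔ q = true) := by
  unfold precedes; decide
lemma mk3_12 : ∀ p q r : Bool, (p && !q && r) = false → (!p && q && !r) = false →
    (precedes (mk3 p q r) 1 2 ↔ r = true) := by
  unfold precedes; decide

def sysF {d : ℕ} (A B C E F G : Fin d) : Fin d → Fin d → Equiv.Perm (Fin 3) :=
  fun a b => mk3 (decide (r01f A C E G b < r01f A C E G a))
                 (decide (r02f B C F G b < r02f B C F G a))
                 (decide (r12f A C E G b < r12f A C E G a))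

section construction

variable {d : ℕ} {A B C E F G : Fin d}

lemma cond1 (hsel : selOK A B C E F G) (a b : Fin d) :
    (decide (r01f A C E G b < r01f A C E G a) && !(decide (r02f B C F G b < r02f B C F G a))
      && decide (r12f A C E G b < r12f A C E G a)) = false := by
  by_cases h1 : r01f A C E G b < r01f A C E G a
  · by_cases h3 : r12f A C E G b < r12f A C E G a
    · have h2 := compat hsel a b h1 h3
      simp [h2]
    · simp [h3]
  · simp [h1]

lemma cond2 (hsel : selOK A B C E F G) {a b : Fin d} (hab : a ≠ b) :
    (!(decide (r01f A C E G b < r01f A C E G a)) && decide (r02f B C F G b < r02f B C F G a)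
      && !(decide (r12f A C E G b < r12f A C E G a))) = false := by
  obtain ⟨hAC, hEG, hBF, -, -, -, -⟩ := id hsel
  by_cases h1 : r01f A C E G b < r01f A C E G a
  · simp [h1]
  · by_cases h3 : r12f A C E G b < r12f A C E G a
    · simp [h3]
    · have h1' : r01f A C E G a < r01f A C E G b :=
        (not_lt.mp h1).lt_of_ne (r01_inj hAC hab)
      have h3' : r12f A C E G a < r12f A C E G b :=
        (not_lt.mp h3).lt_of_ne (r12_inj hEG hab)
      have h2 := lt_asymm (compat hsel b a h1' h3')
      simp [h2]

lemma sysF_prec01 (hsel : selOK A B C E F G) {a b : Fin d} (hab : a ≠ b) :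
    precedes (sysF A B C E F G a b) 0 1 ↔ r01f A C E G b < r01f A C E G a :=
  (mk3_01 _ _ _).trans (by rw [decide_eq_true_iff])

lemma sysF_prec02 (hsel : selOK A B C E F G) {a b : Fin d} (hab : a ≠ b) :
    precedes (sysF A B C E F G a b) 0 2 ↔ r02f B C F G b < r02f B C F G a :=
  (mk3_02 _ _ _ (cond1 hsel a b) (cond2 hsel hab)).trans (by rw [decide_eq_true_iff])

lemma sysF_prec12 (hsel : selOK A B C E F G) {a b : Fin d} (hab : a ≠ b) :
    precedes (sysF A B C E F G a b) 1 2 ↔ r12f A C E G b < r12f A C E G a :=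
  (mk3_12 _ _ _ (cond1 hsel a b) (cond2 hsel hab)).trans (by rw [decide_eq_true_iff])

lemma sysF_system (hsel : selOK A B C E F G) : IsSystem (sysF A B C E F G) := by
  obtain ⟨hAC, hEG, hBF, -, -, -, -⟩ := id hsel
  intro a b hab k
  have f1 : decide (r01f A C E G a < r01f A C E G b)
      = !decide (r01f A C E G b < r01f A C E G a) := by
    by_cases h : r01f A C E G b < r01f A C E G a
    · simp [h, lt_asymm h]
    · have h' : r01f A C E G a < r01f A C E G b := (not_lt.mp h).lt_of_ne (r01_inj hAC hab)
      simp [h, h']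
  have f2 : decide (r02f B C F G a < r02f B C F G b)
      = !decide (r02f B C F G b < r02f B C F G a) := by
    by_cases h : r02f B C F G b < r02f B C F G a
    · simp [h, lt_asymm h]
    · have h' : r02f B C F G a < r02f B C F G b := (not_lt.mp h).lt_of_ne (r02_inj hBF hab)
      simp [h, h']
  have f3 : decide (r12f A C E G a < r12f A C E G b)
      = !decide (r12f A C E G b < r12f A C E G a) := by
    by_cases h : r12f A C E G b < r12f A C E G a
    · simp [h, lt_asymm h]
    · have h' : r12f A C E G a < r12f A C E G b := (not_lt.mp h).lt_of_ne (r12_inj hEG hab)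
      simp [h, h']
  show mk3 _ _ _ k = _
  rw [f1, f2, f3]
  exact mk3_rev _ _ _ k

lemma acyc_of_lt {d : ℕ} {r : Fin d → Fin d → Prop} (f : Fin d → ℤ)
    (h : ∀ a b, r a b → f b < f a) : IsAcyclicRel r := by
  intro a ha
  have key : ∀ x y, Relation.TransGen r x y → f y < f x := by
    intro x y hxy
    induction hxy with
    | single h' => exact h _ _ h'
    | tail _ h' ih => exact lt_trans (h _ _ h') ih
  exact absurd (key a a ha) (lt_irrefl _)

lemma sysF_acyclic (hsel : selOK A B C E F G) :
    ∀ i j : Fin 3, i ≠ j → IsAcyclicRel (tournG (sysF A B C E F G) i j) := by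
  obtain ⟨hAC, hEG, hBF, -, -, -, -⟩ := id hsel
  have H01 : IsAcyclicRel (tournG (sysF A B C E F G) 0 1) :=
    acyc_of_lt (r01f A C E G) (fun a b hr => (sysF_prec01 hsel hr.1).mp hr.2)
  have H02 : IsAcyclicRel (tournG (sysF A B C E F G) 0 2) :=
    acyc_of_lt (r02f B C F G) (fun a b hr => (sysF_prec02 hsel hr.1).mp hr.2)
  have H12 : IsAcyclicRel (tournG (sysF A B C E F G) 1 2) :=
    acyc_of_lt (r12f A C E G) (fun a b hr => (sysF_prec12 hsel hr.1).mp hr.2)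
  have H10 : IsAcyclicRel (tournG (sysF A B C E F G) 1 0) := by
    apply acyc_of_lt (fun y => -r01f A C E G y)
    intro a b hr
    have hnp := (precedes_not _ (show (0:Fin 3) ≠ 1 by decide)).mp hr.2
    have hn2 : ¬ r01f A C E G b < r01f A C E G a :=
      fun h => hnp ((sysF_prec01 hsel hr.1).mpr h)
    exact Int.neg_lt_neg ((not_lt.mp hn2).lt_of_ne (r01_inj hAC hr.1))
  have H20 : IsAcyclicRel (tournG (sysF A B C E F G) 2 0) := by
    apply acyc_of_lt (fun y => -r02f B C F G y)
    intro a b hr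
    have hnp := (precedes_not _ (show (0:Fin 3) ≠ 2 by decide)).mp hr.2
    have hn2 : ¬ r02f B C F G b < r02f B C F G a :=
      fun h => hnp ((sysF_prec02 hsel hr.1).mpr h)
    exact Int.neg_lt_neg ((not_lt.mp hn2).lt_of_ne (r02_inj hBF hr.1))
  have H21 : IsAcyclicRel (tournG (sysF A B C E F G) 2 1) := by
    apply acyc_of_lt (fun y => -r12f A C E G y)
    intro a b hr
    have hnp := (precedes_not _ (show (1:Fin 3) ≠ 2 by decide)).mp hr.2
    have hn2 : ¬ r12f A C E G b < r12f A C E G a :=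
      fun h => hnp ((sysF_prec12 hsel hr.1).mpr h)
    exact Int.neg_lt_neg ((not_lt.mp hn2).lt_of_ne (r12_inj hEG hr.1))
  intro i j hij
  fin_cases i <;> fin_cases j <;>
    first
      | exact absurd rfl hij
      | exact H01 | exact H02 | exact H12 | exact H10 | exact H20 | exact H21

lemma usrc_iff {d : ℕ} (R : Fin d → Fin d → Prop) (f : Fin d → ℤ) (M : Fin d)
    (hiff : ∀ a b, R a b ↔ (a ≠ b ∧ f b < f a)) (htop : ∀ y, y ≠ M → f y < f M) :
    ∀ a, IsUniqueSource R a ↔ a = M := by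
  have hM : ∀ b, ¬ R b M := by
    intro b hb
    rw [hiff] at hb
    exact absurd ((htop b hb.1)) (not_lt.mpr (le_of_lt hb.2))
  intro a
  constructor
  · intro hs
    exact (hs.2 M hM).symm
  · intro ha
    rw [ha]
    refine ⟨hM, ?_⟩
    intro a' ha'
    by_contra hne
    exact ha' M ((hiff M a').mpr ⟨fun h => hne h.symm, htop a' hne⟩)

lemma usrc01 (hsel : selOK A B C E F G) (a : Fin d) :
    IsUniqueSource (tournG (sysF A B C E F G) 0 1) a ↔ a = A :=
  usrc_iff _ (r01f A C E G) A
    (fun a b => ⟨fun hr => ⟨hr.1, (sysF_prec01 hsel hr.1).mp hr.2⟩,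
      fun h => ⟨h.1, (sysF_prec01 hsel h.1).mpr h.2⟩⟩)
    (fun y hy => r01_top hy) a

lemma usrc02 (hsel : selOK A B C E F G) (a : Fin d) :
    IsUniqueSource (tournG (sysF A B C E F G) 0 2) a ↔ a = B :=
  usrc_iff _ (r02f B C F G) B
    (fun a b => ⟨fun hr => ⟨hr.1, (sysF_prec02 hsel hr.1).mp hr.2⟩,
      fun h => ⟨h.1, (sysF_prec02 hsel h.1).mpr h.2⟩⟩)
    (fun y hy => r02_top hy) a

lemma usrc12 (hsel : selOK A B C E F G) (a : Fin d) :
    IsUniqueSource (tournG (sysF A B C E F G) 1 2) a ↔ a = E :=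
  usrc_iff _ (r12f A C E G) E
    (fun a b => ⟨fun hr => ⟨hr.1, (sysF_prec12 hsel hr.1).mp hr.2⟩,
      fun h => ⟨h.1, (sysF_prec12 hsel h.1).mpr h.2⟩⟩)
    (fun y hy => r12_top hy) a

lemma usrc10 (hsel : selOK A B C E F G) (a : Fin d) :
    IsUniqueSource (tournG (sysF A B C E F G) 1 0) a ↔ a = C := by
  have hAC := hsel.1
  refine usrc_iff _ (fun y => -r01f A C E G y) C (fun a b => ?_)
    (fun y hy => Int.neg_lt_neg (r01_bot (E := E) (G := G) hAC hy)) a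
  constructor
  · rintro ⟨hab, hp⟩
    refine ⟨hab, ?_⟩
    have hnp := (precedes_not _ (show (0:Fin 3) ≠ 1 by decide)).mp hp
    have hn2 : ¬ r01f A C E G b < r01f A C E G a :=
      fun h => hnp ((sysF_prec01 hsel hab).mpr h)
    exact Int.neg_lt_neg ((not_lt.mp hn2).lt_of_ne (r01_inj hAC hab))
  · rintro ⟨hab, hp⟩
    refine ⟨hab, ?_⟩
    have hp' : -r01f A C E G b < -r01f A C E G a := hp
    refine (precedes_not _ (show (0:Fin 3) ≠ 1 by decide)).mpr ?_
    intro hcon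
    have := (sysF_prec01 hsel hab).mp hcon
    omega

lemma usrc20 (hsel : selOK A B C E F G) (a : Fin d) :
    IsUniqueSource (tournG (sysF A B C E F G) 2 0) a ↔ a = F := by
  have hBF := hsel.2.2.1
  refine usrc_iff _ (fun y => -r02f B C F G y) F (fun a b => ?_)
    (fun y hy => Int.neg_lt_neg (r02_bot (C := C) (G := G) hBF hy)) a
  constructor
  · rintro ⟨hab, hp⟩
    refine ⟨hab, ?_⟩
    have hnp := (precedes_not _ (show (0:Fin 3) ≠ 2 by decide)).mp hp
    have hn2 : ¬ r02f B C F G b < r02f B C F G a :=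
      fun h => hnp ((sysF_prec02 hsel hab).mpr h)
    exact Int.neg_lt_neg ((not_lt.mp hn2).lt_of_ne (r02_inj hBF hab))
  · rintro ⟨hab, hp⟩
    refine ⟨hab, ?_⟩
    have hp' : -r02f B C F G b < -r02f B C F G a := hp
    refine (precedes_not _ (show (0:Fin 3) ≠ 2 by decide)).mpr ?_
    intro hcon
    have := (sysF_prec02 hsel hab).mp hcon
    omega

lemma usrc21 (hsel : selOK A B C E F G) (a : Fin d) :
    IsUniqueSource (tournG (sysF A B C E F G) 2 1) a ↔ a = G := by
  have hEG := hsel.2.1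
  refine usrc_iff _ (fun y => -r12f A C E G y) G (fun a b => ?_)
    (fun y hy => Int.neg_lt_neg (r12_bot (A := A) (C := C) hEG hy)) a
  constructor
  · rintro ⟨hab, hp⟩
    refine ⟨hab, ?_⟩
    have hnp := (precedes_not _ (show (1:Fin 3) ≠ 2 by decide)).mp hp
    have hn2 : ¬ r12f A C E G b < r12f A C E G a :=
      fun h => hnp ((sysF_prec12 hsel hab).mpr h)
    exact Int.neg_lt_neg ((not_lt.mp hn2).lt_of_ne (r12_inj hEG hab))
  · rintro ⟨hab, hp⟩
    refine ⟨hab, ?_⟩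
    have hp' : -r12f A C E G b < -r12f A C E G a := hp
    refine (precedes_not _ (show (1:Fin 3) ≠ 2 by decide)).mpr ?_
    intro hcon
    have := (sysF_prec12 hsel hab).mp hcon
    omega

lemma spos0 (hsel : selOK A B C E F G) (a : Fin d) :
    simplexPos (sysF A B C E F G) 0 a
      = (if a = A then 1 else 0) + (if a = B then 1 else 0) := by
  unfold simplexPos
  rw [Finset.card_filter, Fin.sum_univ_three]
  have e1 : ¬(0:Fin 3) = 0 ↔ False := by simp
  have e2 : ¬(1:Fin 3) = 0 ↔ True := by simp
  have e3 : ¬(2:Fin 3) = 0 ↔ True := by simp [Fin.ext_iff]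
  simp only [usrc01 hsel a, usrc02 hsel a, ne_eq, e1, e2, e3, true_and, false_and,
    ite_false, zero_add, add_zero]

lemma spos1 (hsel : selOK A B C E F G) (a : Fin d) :
    simplexPos (sysF A B C E F G) 1 a
      = (if a = C then 1 else 0) + (if a = E then 1 else 0) := by
  unfold simplexPos
  rw [Finset.card_filter, Fin.sum_univ_three]
  have e1 : ¬(0:Fin 3) = 1 ↔ True := by simp
  have e2 : ¬(1:Fin 3) = 1 ↔ False := by simp
  have e3 : ¬(2:Fin 3) = 1 ↔ True := by simp [Fin.ext_iff]
  simp only [usrc10 hsel a, usrc12 hsel a, ne_eq, e1, e2, e3, true_and, false_and,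
    ite_false, zero_add, add_zero]

lemma spos2 (hsel : selOK A B C E F G) (a : Fin d) :
    simplexPos (sysF A B C E F G) 2 a
      = (if a = F then 1 else 0) + (if a = G then 1 else 0) := by
  unfold simplexPos
  rw [Finset.card_filter, Fin.sum_univ_three]
  have e1 : ¬(0:Fin 3) = 2 ↔ True := by simp [Fin.ext_iff]
  have e2 : ¬(1:Fin 3) = 2 ↔ True := by simp [Fin.ext_iff]
  have e3 : ¬(2:Fin 3) = 2 ↔ False := by simp
  simp only [usrc20 hsel a, usrc21 hsel a, ne_eq, e1, e2, e3, true_and, false_and,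
    ite_false, zero_add, add_zero]

lemma construct (hsel : selOK A B C E F G) :
    ∃ σ : Fin d → Fin d → Equiv.Perm (Fin 3), IsAcyclicSystem σ ∧
      (∀ a, simplexPos σ 0 a = (if a = A then 1 else 0) + (if a = B then 1 else 0)) ∧
      (∀ a, simplexPos σ 1 a = (if a = C then 1 else 0) + (if a = E then 1 else 0)) ∧
      (∀ a, simplexPos σ 2 a = (if a = F then 1 else 0) + (if a = G then 1 else 0)) :=
  ⟨sysF A B C E F G, ⟨sysF_system hsel, sysF_acyclic hsel⟩,
    spos0 hsel, spos1 hsel, spos2 hsel⟩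

end construction
/-! ### Decomposition of a position into a pair -/

lemma decomp {d : ℕ} (f : Fin d → ℕ) (h : ∑ a, f a = 2) :
    ∃ p q : Fin d, ∀ a, f a = (if a = p then 1 else 0) + (if a = q then 1 else 0) := by
  have h1 : ∃ p, f p ≠ 0 := by
    by_contra hc
    push_neg at hc
    rw [Finset.sum_eq_zero (fun a _ => hc a)] at h
    omega
  obtain ⟨p, hp⟩ := h1
  have hsplit : f p + ∑ a ∈ Finset.univ.erase p, f a = 2 := by
    rw [Finset.add_sum_erase _ f (Finset.mem_univ p)]
    exact h
  by_cases h2 : f p = 1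
  · have hr : ∑ a ∈ Finset.univ.erase p, f a = 1 := by omega
    have h3 : ∃ q ∈ Finset.univ.erase p, f q ≠ 0 := by
      by_contra hc
      push_neg at hc
      rw [Finset.sum_eq_zero hc] at hr
      omega
    obtain ⟨q, hq, hq0⟩ := h3
    have hqp : q ≠ p := (Finset.mem_erase.mp hq).1
    have hsplit2 : f q + ∑ a ∈ (Finset.univ.erase p).erase q, f a = 1 := by
      rw [Finset.add_sum_erase _ f hq]
      exact hr
    have hrest : ∀ a, a ≠ p → a ≠ q → f a = 0 := by
      intro a hap haq
      have h0 : ∑ x ∈ (Finset.univ.erase p).erase q, f x = 0 := by omega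
      exact (Finset.sum_eq_zero_iff.mp h0) a
        (by simp [Finset.mem_erase, hap, haq])
    refine ⟨p, q, fun a => ?_⟩
    by_cases hap : a = p
    · rw [hap, if_pos rfl, if_neg (fun hh => hqp hh.symm)]
      omega
    · by_cases haq : a = q
      · rw [haq, if_neg hqp, if_pos rfl]
        omega
      · rw [if_neg hap, if_neg haq, hrest a hap haq]
  · have hfp : f p = 2 := by omega
    have hrest : ∀ a, a ≠ p → f a = 0 := by
      intro a hap
      have h0 : ∑ x ∈ Finset.univ.erase p, f x = 0 := by omega
      exact (Finset.sum_eq_zero_iff.mp h0) a (by simp [Finset.mem_erase, hap])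
    refine ⟨p, p, fun a => ?_⟩
    by_cases hap : a = p
    · rw [hap, if_pos rfl]
      omega
    · rw [if_neg hap]
      simp [hrest a hap]

/-! ### Statement 18 -/

/-- Every collection of three spread out simplex positions in
`3·Δ_{d-1}` (three lattice points of `{x ∈ ℤ^d_{≥0} : Σ x_a = 2}` such that every
sub-simplex of size `k` contains at most `k` of them) is achievable, up to renumbering,
as the simplex positions of some acyclic system of permutations on the edges of
`3·Δ_{d-1}`. -/
theorem stmt18 (d : ℕ) (x : Fin 3 → Fin d → ℕ)
    (hsum : ∀ i : Fin 3, ∑ a : Fin d, x i a = 2)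
    (hspread : ∀ (m : Fin d → ℕ) (k : ℕ), (∑ a : Fin d, m a) + k = 3 →
      (Finset.univ.filter fun i : Fin 3 => ∀ a : Fin d, m a ≤ x i a).card ≤ k) :
    ∃ σ : Fin d → Fin d → Equiv.Perm (Fin 3), IsAcyclicSystem σ ∧
      ∃ ρ : Equiv.Perm (Fin 3), ∀ (i : Fin 3) (a : Fin d),
        simplexPos σ i a = x (ρ i) a := by
  rcases Nat.eq_zero_or_pos d with hd | hd
  · exfalso
    have h0 := hsum 0
    subst hd
    simp at h0
  choose p q hx using fun i => decomp (x i) (hsum i)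
  -- positions are pairwise distinct
  have hdist : ∀ i j : Fin 3, i ≠ j →
      ¬((p i = p j ∧ q i = q j) ∨ (p i = q j ∧ q i = p j)) := by
    intro i j hij hcon
    have hxx : ∀ a, x i a = x j a := by
      intro a
      rcases hcon with ⟨h1, h2⟩ | ⟨h1, h2⟩
      · rw [hx i a, hx j a, h1, h2]
      · rw [hx i a, hx j a, h1, h2, add_comm]
    have hcard := hspread (x i) 1 (by rw [hsum i])
    have hsub : ({i, j} : Finset (Fin 3)) ⊆
        Finset.univ.filter (fun k => ∀ a, x i a ≤ x k a) := by
      intro k hk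
      simp only [Finset.mem_insert, Finset.mem_singleton] at hk
      rcases hk with rfl | rfl
      · simp [Finset.mem_filter]
      · simp only [Finset.mem_filter, Finset.mem_univ, true_and]
        intro a
        rw [hxx a]
    have hc2 := Finset.card_le_card hsub
    rw [Finset.card_pair hij] at hc2
    omega
  -- no element common to all three positions
  have hcom : ∀ t : Fin d, ∃ i : Fin 3, t ≠ p i ∧ t ≠ q i := by
    intro t
    have hs1 : ∑ a : Fin d, (if a = t then 1 else 0) = 1 := by
      rw [Finset.sum_ite_eq' Finset.univ t (fun _ => 1)]
      simp
    have hcard := hspread (fun a => if a = t then 1 else 0) 2 (by rw [hs1])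
    by_contra hc
    push_neg at hc
    have hall : ∀ i, t = p i ∨ t = q i := by
      intro i
      by_cases h1 : t = p i
      · exact Or.inl h1
      · exact Or.inr (hc i h1)
    have hsub : (Finset.univ : Finset (Fin 3)) ⊆
        Finset.univ.filter (fun k => ∀ a, (if a = t then 1 else 0) ≤ x k a) := by
      intro k _
      simp only [Finset.mem_filter, Finset.mem_univ, true_and]
      intro a
      by_cases hat : a = t
      · rw [if_pos hat, hx k a]
        rcases hall k with h | h
        · rw [if_pos (hat.trans h)]
          exact le_self_add
        · rw [if_pos (hat.trans h)]
          exact le_add_self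
      · rw [if_neg hat]
        exact Nat.zero_le _
    have hc2 := Finset.card_le_card hsub
    simp only [Finset.card_univ, Fintype.card_fin] at hc2
    have hcard' : (Finset.univ.filter
        (fun k : Fin 3 => ∀ a, (if a = t then 1 else 0) ≤ x k a)).card ≤ 2 := hcard
    omega
  -- transfer to the decided core over Fin 6 indices
  set v : Fin 6 → Fin d := ![p 0, q 0, p 1, q 1, p 2, q 2] with hv
  set D : Fin 6 → Fin 6 := fun k =>
    if v k = v 0 then 0 else if v k = v 1 then 1 else if v k = v 2 then 2
    else if v k = v 3 then 3 else if v k = v 4 then 4 else 5 with hD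
  have hL : ∀ k : Fin 6, v (D k) = v k := by
    intro k
    simp only [hD]
    split_ifs with c0 c1 c2 c3 c4
    · exact c0.symm
    · exact c1.symm
    · exact c2.symm
    · exact c3.symm
    · exact c4.symm
    · fin_cases k
      · exact absurd rfl c0
      · exact absurd rfl c1
      · exact absurd rfl c2
      · exact absurd rfl c3
      · exact absurd rfl c4
      · rfl
  have hDeq : ∀ k l : Fin 6, D k = D l ↔ v k = v l := by
    intro k l
    constructor
    · intro h
      rw [← hL k, h, hL l]
    · intro h
      simp only [hD, h]
  have key : ∀ k l : Fin 6, ((D k : ℕ) = (D l : ℕ)) ↔ v k = v l := by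
    intro k l
    rw [Fin.val_eq_val]
    exact hDeq k l
  have hDle : ∀ k : Fin 6, (D k : ℕ) ≤ (k : ℕ) := by
    intro k
    fin_cases k <;> simp only [hD] <;> split_ifs with c0 c1 c2 c3 c4 <;>
      first
        | decide
        | exact absurd rfl c0
        | exact absurd rfl c1
        | exact absurd rfl c2
        | exact absurd rfl c3
        | exact absurd rfl c4
  have hD0 : (D 0 : ℕ) = 0 := by
    simp [hD]
  set kp : Fin 3 → Fin 6 := ![0, 2, 4] with hkp
  set kq : Fin 3 → Fin 6 := ![1, 3, 5] with hkq
  have hvp : ∀ i : Fin 3, v (kp i) = p i := by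
    intro i
    fin_cases i <;> rfl
  have hvq : ∀ i : Fin 3, v (kq i) = q i := by
    intro i
    fin_cases i <;> rfl
  -- pack digits into n
  set n : ℕ := (D 1 : ℕ) + 2*(D 2 : ℕ) + 6*(D 3 : ℕ) + 24*(D 4 : ℕ) + 120*(D 5 : ℕ) with hn
  have hb1 := hDle 1
  have hb2 := hDle 2
  have hb3 := hDle 3
  have hb4 := hDle 4
  have hb5 := hDle 5
  change (D 1 : ℕ) ≤ 1 at hb1; change (D 2 : ℕ) ≤ 2 at hb2; change (D 3 : ℕ) ≤ 3 at hb3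
  change (D 4 : ℕ) ≤ 4 at hb4; change (D 5 : ℕ) ≤ 5 at hb5
  have hlt : n < 720 := by simp only [hn]; omega
  have hcore := coreN_all n hlt
  have hPeq : ![0, n/2%3, n/24%5] = (fun i : Fin 3 => ((D (kp i)) : ℕ)) := by
    funext i
    fin_cases i
    · simp only [hkp]
      show (0 : ℕ) = (D 0 : ℕ)
      rw [hD0]
    · show n/2%3 = (D 2 : ℕ)
      simp only [hn]; omega
    · show n/24%5 = (D 4 : ℕ)
      simp only [hn]; omega
  have hQeq : ![n%2, n/6%4, n/120%6] = (fun i : Fin 3 => ((D (kq i)) : ℕ)) := by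
    funext i
    fin_cases i
    · show n%2 = (D 1 : ℕ)
      simp only [hn]; omega
    · show n/6%4 = (D 3 : ℕ)
      simp only [hn]; omega
    · show n/120%6 = (D 5 : ℕ)
      simp only [hn]; omega
  rw [hPeq, hQeq] at hcore
  -- feed hypotheses of the core
  have hkeypp : ∀ i j : Fin 3, ((D (kp i) : ℕ) = (D (kp j) : ℕ)) ↔ p i = p j := by
    intro i j; rw [key, hvp, hvp]
  have hkeyqq : ∀ i j : Fin 3, ((D (kq i) : ℕ) = (D (kq j) : ℕ)) ↔ q i = q j := by
    intro i j; rw [key, hvq, hvq]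
  have hkeypq : ∀ i j : Fin 3, ((D (kp i) : ℕ) = (D (kq j) : ℕ)) ↔ p i = q j := by
    intro i j; rw [key, hvp, hvq]
  have hkeyqp : ∀ i j : Fin 3, ((D (kq i) : ℕ) = (D (kp j) : ℕ)) ↔ q i = p j := by
    intro i j; rw [key, hvq, hvp]
  obtain ⟨i0, i1, i2, h01, h02, h12, bA, bC, bF, hselN⟩ :=
    hcore
      (by
        intro i j hij hcon
        refine hdist i j hij ?_
        rcases hcon with ⟨h1, h2⟩ | ⟨h1, h2⟩
        · exact Or.inl ⟨(hkeypp i j).mp h1, (hkeyqq i j).mp h2⟩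
        · exact Or.inr ⟨(hkeypq i j).mp h1, (hkeyqp i j).mp h2⟩)
      (by
        intro t
        obtain ⟨i, h1, h2⟩ := hcom (p t)
        exact ⟨i, fun hcc => h1 ((hkeypp t i).mp hcc),
          fun hcc => h2 ((hkeypq t i).mp hcc)⟩)
      (by
        intro t
        obtain ⟨i, h1, h2⟩ := hcom (q t)
        exact ⟨i, fun hcc => h1 ((hkeyqp t i).mp hcc),
          fun hcc => h2 ((hkeyqq t i).mp hcc)⟩)
  -- the selected elements in Fin d
  set AA : Fin d := cond bA (p i0) (q i0) with hAA
  set BB : Fin d := cond bA (q i0) (p i0) with hBB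
  set CC : Fin d := cond bC (p i1) (q i1) with hCC
  set EE : Fin d := cond bC (q i1) (p i1) with hEE
  set FF : Fin d := cond bF (p i2) (q i2) with hFF
  set GG : Fin d := cond bF (q i2) (p i2) with hGG
  set jA : Fin 6 := cond bA (kp i0) (kq i0) with hjA
  set jB : Fin 6 := cond bA (kq i0) (kp i0) with hjB
  set jC : Fin 6 := cond bC (kp i1) (kq i1) with hjC
  set jE : Fin 6 := cond bC (kq i1) (kp i1) with hjE
  set jF : Fin 6 := cond bF (kp i2) (kq i2) with hjF
  set jG : Fin 6 := cond bF (kq i2) (kp i2) with hjG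
  have hvA : v jA = AA := by cases bA <;> simp only [hjA, hAA, cond] <;> [exact hvq i0; exact hvp i0]
  have hvB : v jB = BB := by cases bA <;> simp only [hjB, hBB, cond] <;> [exact hvp i0; exact hvq i0]
  have hvC : v jC = CC := by cases bC <;> simp only [hjC, hCC, cond] <;> [exact hvq i1; exact hvp i1]
  have hvE : v jE = EE := by cases bC <;> simp only [hjE, hEE, cond] <;> [exact hvp i1; exact hvq i1]
  have hvF : v jF = FF := by cases bF <;> simp only [hjF, hFF, cond] <;> [exact hvq i2; exact hvp i2]
  have hvG : v jG = GG := by cases bF <;> simp only [hjG, hGG, cond] <;> [exact hvp i2; exact hvq i2]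
  have hselD : selOK ((D jA : ℕ)) ((D jB : ℕ)) ((D jC : ℕ)) ((D jE : ℕ))
      ((D jF : ℕ)) ((D jG : ℕ)) := by
    cases bA <;> cases bC <;> cases bF <;> exact hselN
  -- translate selOK to Fin d
  have keyv : ∀ (k l : Fin 6), ((D k : ℕ) = (D l : ℕ)) ↔ v k = v l := key
  have hselF : selOK AA BB CC EE FF GG := by
    obtain ⟨n1, n2, n3, m1, m2, m3, m4⟩ := hselD
    refine ⟨?_, ?_, ?_, ?_, ?_, ?_, ?_⟩
    · rw [← hvA, ← hvC]
      exact fun h => n1 ((keyv jA jC).mpr h)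
    · rw [← hvE, ← hvG]
      exact fun h => n2 ((keyv jE jG).mpr h)
    · rw [← hvB, ← hvF]
      exact fun h => n3 ((keyv jB jF).mpr h)
    · rw [← hvA, ← hvE, ← hvB]
      intro h
      exact (keyv jB jA).mp (m1 ((keyv jA jE).mpr h))
    · rw [← hvC, ← hvG, ← hvF]
      intro h
      exact (keyv jF jC).mp (m2 ((keyv jC jG).mpr h))
    · rw [← hvA, ← hvE, ← hvC, ← hvG, ← hvB, ← hvF]
      intro h1 h2 h3
      obtain ⟨u1, u2⟩ := m3 (fun hh => h1 ((keyv jA jE).mp hh))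
        (fun hh => h2 ((keyv jC jG).mp hh)) (fun hh => h3 ((keyv jA jG).mp hh))
      exact ⟨fun hh => u1 ((keyv jB jG).mpr hh), fun hh => u2 ((keyv jF jA).mpr hh)⟩
    · rw [← hvA, ← hvE, ← hvC, ← hvG, ← hvB, ← hvF]
      intro h1 h2 h3
      obtain ⟨u1, u2⟩ := m4 (fun hh => h1 ((keyv jA jE).mp hh))
        (fun hh => h2 ((keyv jC jG).mp hh)) (fun hh => h3 ((keyv jE jC).mp hh))
      exact ⟨fun hh => u1 ((keyv jB jC).mpr hh), fun hh => u2 ((keyv jF jE).mpr hh)⟩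
  obtain ⟨σ, hacyc, hs0, hs1, hs2⟩ := construct hselF
  have hinj : Function.Injective ![i0, i1, i2] := by
    intro a b hab
    fin_cases a <;> fin_cases b <;>
      first
        | rfl
        | exact absurd hab h01
        | exact absurd hab h02
        | exact absurd hab h12
        | exact absurd hab.symm h01
        | exact absurd hab.symm h02
        | exact absurd hab.symm h12
  let ρ : Equiv.Perm (Fin 3) := Equiv.ofBijective _ (Finite.injective_iff_bijective.mp hinj)
  refine ⟨σ, hacyc, ρ, ?_⟩
  intro i a
  fin_cases i
  · show simplexPos σ 0 a = x (ρ 0) a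
    have hr0 : ρ 0 = i0 := rfl
    rw [hr0, hs0 a, hx i0 a, hAA, hBB]
    cases bA
    · simp only [Bool.cond_false]
      exact add_comm _ _
    · simp only [Bool.cond_true]
  · show simplexPos σ 1 a = x (ρ 1) a
    have hr1 : ρ 1 = i1 := rfl
    rw [hr1, hs1 a, hx i1 a, hCC, hEE]
    cases bC
    · simp only [Bool.cond_false]
      exact add_comm _ _
    · simp only [Bool.cond_true]
  · show simplexPos σ 2 a = x (ρ 2) a
    have hr2 : ρ 2 = i2 := rfl
    rw [hr2, hs2 a, hx i2 a, hFF, hGG]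
    cases bF
    · simp only [Bool.cond_false]
      exact add_comm _ _
    · simp only [Bool.cond_true]
end

section
/- Let u, v, w be three permutations of [n] forming a system of permutations on the edges of a triangle (read clockwise), arising from a lozenge tiling of n·Δ_2. Then for every pair of distinct i, j ∈ [n], it is not the case that i precedes j in all three of u, v, w. (That is, the system of permutations of a lozenge tiling is acyclic.) -/
open scoped Classical

/-- Trace of a colour downwards (towards the bottom edge of the triangle): from the
upward triangle `(r, c)`, the colour crosses the bottom edge into the downward triangle
`(r+1, c)` and continues from the upward triangle paired with it, until it reaches the
bottom row `r = n-1` and exits the bottom edge at column `c`.  The fuel argument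
guarantees termination. -/
def traceB {n : ℕ} (f : DownT n → UpT n) : ℕ → UpT n → UpT n
  | 0, u => u
  | fuel + 1, u =>
    if h : (u.1.1 : ℕ) + 1 < n then
      traceB f fuel (f ⟨(⟨(u.1.1 : ℕ) + 1, h⟩, u.1.2), by
        have h2 : (u.1.2 : ℕ) ≤ (u.1.1 : ℕ) := u.2
        exact Nat.lt_succ_of_le h2⟩)
    else u

/-- Trace of a colour towards the left edge of the triangle: from the upward triangle
`(r, c)`, the colour crosses its left edge into the downward triangle `(r, c-1)` and
continues from the upward triangle paired with it, until it reaches `c = 0` and exits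
the left edge at row `r`. -/
def traceL {n : ℕ} (f : DownT n → UpT n) : ℕ → UpT n → UpT n
  | 0, u => u
  | fuel + 1, u =>
    if h : 0 < (u.1.2 : ℕ) then
      traceL f fuel (f ⟨(u.1.1, ⟨(u.1.2 : ℕ) - 1, by have := u.1.2.isLt; omega⟩), by
        have h2 : (u.1.2 : ℕ) ≤ (u.1.1 : ℕ) := u.2
        simp only [Fin.lt_def]
        omega⟩)
    else u

/-- Trace of a colour towards the right edge of the triangle: from the upward triangle
`(r, c)`, the colour crosses its right edge into the downward triangle `(r, c)` and
continues from the upward triangle paired with it, until it reaches `c = r` and exits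
the right edge at row `r`. -/
def traceR {n : ℕ} (f : DownT n → UpT n) : ℕ → UpT n → UpT n
  | 0, u => u
  | fuel + 1, u =>
    if h : (u.1.2 : ℕ) < (u.1.1 : ℕ) then
      traceR f fuel (f ⟨(u.1.1, u.1.2), by exact h⟩)
    else u

namespace S19

variable {n : ℕ}

lemma upt_ext {x y : UpT n} (h1 : (x.1.1 : ℕ) = (y.1.1 : ℕ))
    (h2 : (x.1.2 : ℕ) = (y.1.2 : ℕ)) : x = y :=
  Subtype.ext (Prod.ext_iff.mpr ⟨Fin.ext h1, Fin.ext h2⟩)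

section Generic

variable (p q : UpT n → ℕ) (σ : UpT n → UpT n) (T : ℕ → UpT n → UpT n)

def Good (x : UpT n) : Prop := 0 < p x → σ x ≠ x

lemma good_step (hσinj : ∀ x y, 0 < p x → 0 < p y → σ x = σ y → x = y)
    {x : UpT n} (hx : 0 < p x) (hne : σ x ≠ x) : Good p σ (σ x) := by
  intro hp h
  exact hne (hσinj (σ x) x hp hx h)

lemma T_stat (hT0 : ∀ x, T 0 x = x)
    (hTS : ∀ m x, T (m+1) x = if 0 < p x then T m (σ x) else x) :
    ∀ (m : ℕ) (x : UpT n), p x = 0 → T m x = x := by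
  intro m
  induction m with
  | zero => intro x _; exact hT0 x
  | succ m ih => intro x h; rw [hTS, if_neg (by omega)]

lemma loop_absorb (hT0 : ∀ x, T 0 x = x)
    (hTS : ∀ m x, T (m+1) x = if 0 < p x then T m (σ x) else x) :
    ∀ (m : ℕ) (x : UpT n), 0 < p x → σ x = x → T m x = x := by
  intro m
  induction m with
  | zero => intro x _ _; exact hT0 x
  | succ m ih => intro x h hs; rw [hTS, if_pos h, hs]; exact ih x h hs

lemma stable (hT0 : ∀ x, T 0 x = x)
    (hTS : ∀ m x, T (m+1) x = if 0 < p x then T m (σ x) else x)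
    (hstep : ∀ x, 0 < p x → σ x = x ∨ (p (σ x) + 1 = p x ∧
      (q (σ x) = q x ∨ q (σ x) + 1 = q x))) :
    ∀ (m : ℕ) (x : UpT n), p x ≤ m → T (m+1) x = T m x := by
  intro m
  induction m with
  | zero => intro x h; rw [hTS, if_neg (by omega), hT0]
  | succ m ih =>
    intro x h
    by_cases h0 : 0 < p x
    · rcases hstep x h0 with hs | ⟨hp, _⟩
      · rw [loop_absorb p σ T hT0 hTS _ x h0 hs,
            loop_absorb p σ T hT0 hTS _ x h0 hs]
      · rw [hTS (m+1) x, if_pos h0, hTS m x, if_pos h0]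
        exact ih (σ x) (by omega)
    · rw [T_stat p σ T hT0 hTS _ x (by omega),
          T_stat p σ T hT0 hTS _ x (by omega)]

lemma end_unfold (hT0 : ∀ x, T 0 x = x)
    (hTS : ∀ m x, T (m+1) x = if 0 < p x then T m (σ x) else x)
    (hstep : ∀ x, 0 < p x → σ x = x ∨ (p (σ x) + 1 = p x ∧
      (q (σ x) = q x ∨ q (σ x) + 1 = q x)))
    (hpn : ∀ x, p x < n)
    (x : UpT n) (hx : 0 < p x) (hne : σ x ≠ x) : T n x = T n (σ x) := by
  obtain ⟨m, rfl⟩ : ∃ m, n = m + 1 := by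
    have := hpn x; exact ⟨n - 1, by omega⟩
  rcases hstep x hx with hs | ⟨hp, _⟩
  · exact absurd hs hne
  · rw [hTS m x, if_pos hx]
    have hpx := hpn x
    exact (stable p q σ T hT0 hTS hstep m (σ x) (by omega)).symm

lemma advance (hT0 : ∀ x, T 0 x = x)
    (hTS : ∀ m x, T (m+1) x = if 0 < p x then T m (σ x) else x)
    (hstep : ∀ x, 0 < p x → σ x = x ∨ (p (σ x) + 1 = p x ∧
      (q (σ x) = q x ∨ q (σ x) + 1 = q x)))
    (hσinj : ∀ x y, 0 < p x → 0 < p y → σ x = σ y → x = y)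
    (hpn : ∀ x, p x < n) :
    ∀ (s : ℕ) (x : UpT n), Good p σ x → s ≤ p x →
      ∃ y, p y + s = p x ∧ q y ≤ q x ∧ q x ≤ q y + s ∧ Good p σ y ∧ T n y = T n x := by
  intro s
  induction s with
  | zero => intro x hg _; exact ⟨x, by omega, le_rfl, by omega, hg, rfl⟩
  | succ s ih =>
    intro x hg hs
    have hx : 0 < p x := by omega
    have hne := hg hx
    rcases hstep x hx with h | ⟨hp, hqd⟩
    · exact absurd h hne
    · have hg' : Good p σ (σ x) := good_step p σ hσinj hx hne
      obtain ⟨y, h1, h2, h3, h4, h5⟩ := ih (σ x) hg' (by omega)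
      refine ⟨y, by omega, ?_, ?_, h4, ?_⟩
      · rcases hqd with h | h <;> omega
      · rcases hqd with h | h <;> omega
      · rw [h5]; exact (end_unfold p q σ T hT0 hTS hstep hpn x hx hne).symm

lemma comp (hT0 : ∀ x, T 0 x = x)
    (hTS : ∀ m x, T (m+1) x = if 0 < p x then T m (σ x) else x)
    (hstep : ∀ x, 0 < p x → σ x = x ∨ (p (σ x) + 1 = p x ∧
      (q (σ x) = q x ∨ q (σ x) + 1 = q x)))
    (hσinj : ∀ x y, 0 < p x → 0 < p y → σ x = σ y → x = y)
    (hpq : ∀ x y, p x = p y → q x = q y → x = y)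
    (hpn : ∀ x, p x < n) :
    ∀ (k : ℕ) (x y : UpT n), p x ≤ k → p x = p y → Good p σ x → Good p σ y →
      q x < q y → q (T n x) < q (T n y) := by
  intro k
  induction k with
  | zero =>
    intro x y hk hpe hgx hgy hq
    rw [T_stat p σ T hT0 hTS n x (by omega), T_stat p σ T hT0 hTS n y (by omega)]
    exact hq
  | succ k ih =>
    intro x y hk hpe hgx hgy hq
    by_cases h0 : 0 < p x
    · have hy0 : 0 < p y := by omega
      have hnex := hgx h0
      have hney := hgy hy0
      rcases hstep x h0 with h | ⟨hpx, hqx⟩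
      · exact absurd h hnex
      rcases hstep y hy0 with h | ⟨hpy, hqy⟩
      · exact absurd h hney
      have hxy : x ≠ y := by intro h; rw [h] at hq; omega
      have hne' : σ x ≠ σ y := fun h => hxy (hσinj x y h0 hy0 h)
      have hqne : q (σ x) ≠ q (σ y) := fun h => hne' (hpq _ _ (by omega) h)
      have hqlt : q (σ x) < q (σ y) := by
        rcases hqx with h | h <;> rcases hqy with h' | h' <;> omega
      rw [end_unfold p q σ T hT0 hTS hstep hpn x h0 hnex,
          end_unfold p q σ T hT0 hTS hstep hpn y hy0 hney]
      exact ih (σ x) (σ y) (by omega) (by omega)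
        (good_step p σ hσinj h0 hnex) (good_step p σ hσinj hy0 hney) hqlt
    · rw [T_stat p σ T hT0 hTS n x (by omega), T_stat p σ T hT0 hTS n y (by omega)]
      exact hq

lemma main (hT0 : ∀ x, T 0 x = x)
    (hTS : ∀ m x, T (m+1) x = if 0 < p x then T m (σ x) else x)
    (hstep : ∀ x, 0 < p x → σ x = x ∨ (p (σ x) + 1 = p x ∧
      (q (σ x) = q x ∨ q (σ x) + 1 = q x)))
    (hσinj : ∀ x y, 0 < p x → 0 < p y → σ x = σ y → x = y)
    (hpq : ∀ x y, p x = p y → q x = q y → x = y)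
    (hpn : ∀ x, p x < n)
    (x y : UpT n) (hgx : Good p σ x) (hgy : Good p σ y)
    (hq : q (T n y) < q (T n x)) :
    (p x ≤ p y → q y + p x < q x + p y) ∧ (p y < p x → q y < q x) := by
  constructor
  · intro hle
    obtain ⟨y', hp', hq1, hq2, hg', he'⟩ :=
      advance p q σ T hT0 hTS hstep hσinj hpn (p y - p x) y hgy (by omega)
    have hpy' : p y' = p x := by omega
    rcases Nat.lt_trichotomy (q x) (q y') with h | h | h
    · have := comp p q σ T hT0 hTS hstep hσinj hpq hpn (p x) x y' le_rfl hpy'.symm hgx hg' h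
      rw [he'] at this; omega
    · have hxy : x = y' := hpq x y' hpy'.symm h
      rw [hxy, he'] at hq
      exact absurd hq (lt_irrefl _)
    · omega
  · intro hlt
    obtain ⟨x', hp', hq1, hq2, hg', he'⟩ :=
      advance p q σ T hT0 hTS hstep hσinj hpn (p x - p y) x hgx (by omega)
    have hpx' : p x' = p y := by omega
    rcases Nat.lt_trichotomy (q x') (q y) with h | h | h
    · have := comp p q σ T hT0 hTS hstep hσinj hpq hpn (p x') x' y le_rfl hpx' hg' hgy h
      rw [he'] at this; omega
    · have hxy : x' = y := hpq x' y hpx' h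
      rw [← hxy, he'] at hq
      exact absurd hq (lt_irrefl _)
    · omega

end Generic

end S19

namespace S19

variable {n : ℕ}

/-! ### Direction L (towards the left edge) -/

def pL (x : UpT n) : ℕ := x.1.2
def qL (x : UpT n) : ℕ := x.1.1

@[simp] lemma pL_def (x : UpT n) : pL x = (x.1.2 : ℕ) := rfl
@[simp] lemma qL_def (x : UpT n) : qL x = (x.1.1 : ℕ) := rfl

def dL (x : UpT n) (h : 0 < (x.1.2 : ℕ)) : DownT n :=
  ⟨(x.1.1, ⟨(x.1.2 : ℕ) - 1, by have := x.1.2.isLt; omega⟩), by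
    have h2 : (x.1.2 : ℕ) ≤ (x.1.1 : ℕ) := x.2
    simp only [Fin.lt_def]
    omega⟩

def σL (f : DownT n → UpT n) (x : UpT n) : UpT n :=
  if h : 0 < (x.1.2 : ℕ) then f (dL x h) else x

lemma hTSL (f : DownT n → UpT n) (m : ℕ) (x : UpT n) :
    traceL f (m+1) x = if 0 < pL x then traceL f m (σL f x) else x := by
  by_cases h : 0 < (x.1.2 : ℕ)
  · rw [if_pos (show 0 < pL x from h), traceL, dif_pos h, σL, dif_pos h]
    rfl
  · rw [if_neg (show ¬ 0 < pL x from h), traceL, dif_neg h]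

lemma hstepL {f : DownT n → UpT n} (hf : IsLozengeTiling f) (x : UpT n) (hx : 0 < pL x) :
    σL f x = x ∨ (pL (σL f x) + 1 = pL x ∧ (qL (σL f x) = qL x ∨ qL (σL f x) + 1 = qL x)) := by
  have hx' : 0 < (x.1.2 : ℕ) := hx
  have hσ : σL f x = f (dL x hx') := dif_pos hx'
  have adj := hf.2 (dL x hx')
  have hd1 : ((dL x hx').1.1 : ℕ) = (x.1.1 : ℕ) := rfl
  have hd2 : ((dL x hx').1.2 : ℕ) = (x.1.2 : ℕ) - 1 := rfl
  rcases adj with ⟨h1, h2⟩ | ⟨h1, h2⟩ | ⟨h1, h2⟩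
  · right
    rw [hσ]
    simp only [pL_def, qL_def]
    omega
  · left
    rw [hσ]
    apply upt_ext <;> omega
  · right
    rw [hσ]
    simp only [pL_def, qL_def]
    omega

lemma hσinjL {f : DownT n → UpT n} (hf : IsLozengeTiling f) (x y : UpT n)
    (hx : 0 < pL x) (hy : 0 < pL y) (h : σL f x = σL f y) : x = y := by
  have hx' : 0 < (x.1.2 : ℕ) := hx
  have hy' : 0 < (y.1.2 : ℕ) := hy
  rw [σL, dif_pos hx', σL, dif_pos hy'] at h
  have hd := hf.1 h
  have h1 : ((dL x hx').1.1 : ℕ) = ((dL y hy').1.1 : ℕ) := by rw [hd]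
  have h2 : ((dL x hx').1.2 : ℕ) = ((dL y hy').1.2 : ℕ) := by rw [hd]
  have e1 : (x.1.1 : ℕ) = (y.1.1 : ℕ) := h1
  have e2 : (x.1.2 : ℕ) - 1 = (y.1.2 : ℕ) - 1 := h2
  exact upt_ext e1 (by omega)

lemma hpqL (x y : UpT n) (h1 : pL x = pL y) (h2 : qL x = qL y) : x = y :=
  upt_ext h2 h1

lemma hpnL (x : UpT n) : pL x < n := x.1.2.isLt

/-! ### Direction R (towards the right edge) -/

def pR (x : UpT n) : ℕ := (x.1.1 : ℕ) - (x.1.2 : ℕ)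
def qR (x : UpT n) : ℕ := x.1.1

@[simp] lemma pR_def (x : UpT n) : pR x = (x.1.1 : ℕ) - (x.1.2 : ℕ) := rfl
@[simp] lemma qR_def (x : UpT n) : qR x = (x.1.1 : ℕ) := rfl

def dR (x : UpT n) (h : (x.1.2 : ℕ) < (x.1.1 : ℕ)) : DownT n :=
  ⟨(x.1.1, x.1.2), h⟩

def σR (f : DownT n → UpT n) (x : UpT n) : UpT n :=
  if h : (x.1.2 : ℕ) < (x.1.1 : ℕ) then f (dR x h) else x

lemma hTSR (f : DownT n → UpT n) (m : ℕ) (x : UpT n) :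
    traceR f (m+1) x = if 0 < pR x then traceR f m (σR f x) else x := by
  by_cases h : (x.1.2 : ℕ) < (x.1.1 : ℕ)
  · rw [if_pos (show 0 < pR x by simp only [pR_def]; omega), traceR, dif_pos h, σR, dif_pos h]
    rfl
  · rw [if_neg (show ¬ 0 < pR x by simp only [pR_def]; omega), traceR, dif_neg h]

lemma hstepR {f : DownT n → UpT n} (hf : IsLozengeTiling f) (x : UpT n) (hx : 0 < pR x) :
    σR f x = x ∨ (pR (σR f x) + 1 = pR x ∧ (qR (σR f x) = qR x ∨ qR (σR f x) + 1 = qR x)) := by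
  have hx' : (x.1.2 : ℕ) < (x.1.1 : ℕ) := by
    have := hx; simp only [pR_def] at this; omega
  have hσ : σR f x = f (dR x hx') := dif_pos hx'
  have adj := hf.2 (dR x hx')
  have hd1 : ((dR x hx').1.1 : ℕ) = (x.1.1 : ℕ) := rfl
  have hd2 : ((dR x hx').1.2 : ℕ) = (x.1.2 : ℕ) := rfl
  have hle : ((f (dR x hx')).1.2 : ℕ) ≤ ((f (dR x hx')).1.1 : ℕ) := (f (dR x hx')).2
  rcases adj with ⟨h1, h2⟩ | ⟨h1, h2⟩ | ⟨h1, h2⟩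
  · left
    rw [hσ]
    apply upt_ext <;> omega
  · right
    rw [hσ]
    simp only [pR_def, qR_def]
    omega
  · right
    rw [hσ]
    simp only [pR_def, qR_def]
    omega

lemma hσinjR {f : DownT n → UpT n} (hf : IsLozengeTiling f) (x y : UpT n)
    (hx : 0 < pR x) (hy : 0 < pR y) (h : σR f x = σR f y) : x = y := by
  have hx' : (x.1.2 : ℕ) < (x.1.1 : ℕ) := by
    have := hx; simp only [pR_def] at this; omega
  have hy' : (y.1.2 : ℕ) < (y.1.1 : ℕ) := by
    have := hy; simp only [pR_def] at this; omega
  rw [σR, dif_pos hx', σR, dif_pos hy'] at h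
  have hd := hf.1 h
  have h1 : ((dR x hx').1.1 : ℕ) = ((dR y hy').1.1 : ℕ) := by rw [hd]
  have h2 : ((dR x hx').1.2 : ℕ) = ((dR y hy').1.2 : ℕ) := by rw [hd]
  exact upt_ext h1 h2

lemma hpqR (x y : UpT n) (h1 : pR x = pR y) (h2 : qR x = qR y) : x = y := by
  have hx : (x.1.2 : ℕ) ≤ (x.1.1 : ℕ) := x.2
  have hy : (y.1.2 : ℕ) ≤ (y.1.1 : ℕ) := y.2
  simp only [pR_def] at h1
  simp only [qR_def] at h2
  exact upt_ext h2 (by omega)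

lemma hpnR (x : UpT n) : pR x < n := by
  have := x.1.1.isLt
  simp only [pR_def]
  omega

/-! ### Direction B (towards the bottom edge) -/

def pB (x : UpT n) : ℕ := n - 1 - (x.1.1 : ℕ)
def qB (x : UpT n) : ℕ := n - 1 - (x.1.2 : ℕ)

@[simp] lemma pB_def (x : UpT n) : pB x = n - 1 - (x.1.1 : ℕ) := rfl
@[simp] lemma qB_def (x : UpT n) : qB x = n - 1 - (x.1.2 : ℕ) := rfl

def dB (x : UpT n) (h : (x.1.1 : ℕ) + 1 < n) : DownT n :=
  ⟨(⟨(x.1.1 : ℕ) + 1, h⟩, x.1.2), by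
    have h2 : (x.1.2 : ℕ) ≤ (x.1.1 : ℕ) := x.2
    exact Nat.lt_succ_of_le h2⟩

def σB (f : DownT n → UpT n) (x : UpT n) : UpT n :=
  if h : (x.1.1 : ℕ) + 1 < n then f (dB x h) else x

lemma hTSB (f : DownT n → UpT n) (m : ℕ) (x : UpT n) :
    traceB f (m+1) x = if 0 < pB x then traceB f m (σB f x) else x := by
  have hlt := x.1.1.isLt
  by_cases h : (x.1.1 : ℕ) + 1 < n
  · rw [if_pos (show 0 < pB x by simp only [pB_def]; omega), traceB, dif_pos h, σB, dif_pos h]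
    rfl
  · rw [if_neg (show ¬ 0 < pB x by simp only [pB_def]; omega), traceB, dif_neg h]

lemma hstepB {f : DownT n → UpT n} (hf : IsLozengeTiling f) (x : UpT n) (hx : 0 < pB x) :
    σB f x = x ∨ (pB (σB f x) + 1 = pB x ∧ (qB (σB f x) = qB x ∨ qB (σB f x) + 1 = qB x)) := by
  have hx' : (x.1.1 : ℕ) + 1 < n := by
    have := hx; simp only [pB_def] at this; omega
  have hσ : σB f x = f (dB x hx') := dif_pos hx'
  have adj := hf.2 (dB x hx')
  have hd1 : ((dB x hx').1.1 : ℕ) = (x.1.1 : ℕ) + 1 := rfl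
  have hd2 : ((dB x hx').1.2 : ℕ) = (x.1.2 : ℕ) := rfl
  have hcx : (x.1.2 : ℕ) ≤ (x.1.1 : ℕ) := x.2
  have hfc := (f (dB x hx')).1.2.isLt
  rcases adj with ⟨h1, h2⟩ | ⟨h1, h2⟩ | ⟨h1, h2⟩
  · right
    rw [hσ]
    simp only [pB_def, qB_def]
    omega
  · right
    rw [hσ]
    simp only [pB_def, qB_def]
    omega
  · left
    rw [hσ]
    apply upt_ext <;> omega

lemma hσinjB {f : DownT n → UpT n} (hf : IsLozengeTiling f) (x y : UpT n)
    (hx : 0 < pB x) (hy : 0 < pB y) (h : σB f x = σB f y) : x = y := by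
  have hx' : (x.1.1 : ℕ) + 1 < n := by
    have := hx; simp only [pB_def] at this; omega
  have hy' : (y.1.1 : ℕ) + 1 < n := by
    have := hy; simp only [pB_def] at this; omega
  rw [σB, dif_pos hx', σB, dif_pos hy'] at h
  have hd := hf.1 h
  have h1 : ((dB x hx').1.1 : ℕ) = ((dB y hy').1.1 : ℕ) := by rw [hd]
  have h2 : ((dB x hx').1.2 : ℕ) = ((dB y hy').1.2 : ℕ) := by rw [hd]
  have e1 : (x.1.1 : ℕ) + 1 = (y.1.1 : ℕ) + 1 := h1
  exact upt_ext (by omega) h2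

lemma hpqB (x y : UpT n) (h1 : pB x = pB y) (h2 : qB x = qB y) : x = y := by
  have hx := x.1.1.isLt
  have hy := y.1.1.isLt
  have hx2 := x.1.2.isLt
  have hy2 := y.1.2.isLt
  simp only [pB_def] at h1
  simp only [qB_def] at h2
  exact upt_ext (by omega) (by omega)

lemma hpnB (x : UpT n) : pB x < n := by
  have := x.1.1.isLt
  simp only [pB_def]
  omega

end S19

/-- Let `u, v, w` be the system of permutations (read clockwise: `u` on
the left edge from the bottom-left vertex up, `v` on the right edge downwards, `w` on the
bottom edge from right to left) induced by a lozenge tiling of `n·Δ_2` with unit triangle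
tiles numbered by `t`.  Then the system is acyclic: no pair `i ≠ j` appears in the same
relative order in all three of `u, v, w`. -/
theorem stmt19 (n : ℕ) (f : DownT n → UpT n) (hf : IsLozengeTiling f)
    (t : Fin n → UpT n) (ht : Function.Injective t)
    (htri : ∀ (i : Fin n) (dt : DownT n), f dt ≠ t i)
    (u v w : Equiv.Perm (Fin n))
    (hu : ∀ k : Fin n, ((traceL f n (t (u k))).1.1 : ℕ) = n - 1 - (k : ℕ))
    (hv : ∀ k : Fin n, ((traceR f n (t (v k))).1.1 : ℕ) = (k : ℕ))
    (hw : ∀ k : Fin n, ((traceB f n (t (w k))).1.2 : ℕ) = n - 1 - (k : ℕ)) :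
    ∀ i j : Fin n, i ≠ j →
      ¬ (precedes u i j ∧ precedes v i j ∧ precedes w i j) := by
  intro i j hij h
  obtain ⟨hu', hv', hw'⟩ := h
  have hsu : ((u.symm i : Fin n) : ℕ) < ((u.symm j : Fin n) : ℕ) := hu'
  have hsv : ((v.symm i : Fin n) : ℕ) < ((v.symm j : Fin n) : ℕ) := hv'
  have hsw : ((w.symm i : Fin n) : ℕ) < ((w.symm j : Fin n) : ℕ) := hw'
  have hsun := (u.symm j).isLt
  have hsvn := (v.symm j).isLt
  have hswn := (w.symm j).isLt
  have HLi := hu (u.symm i); rw [Equiv.apply_symm_apply] at HLi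
  have HLj := hu (u.symm j); rw [Equiv.apply_symm_apply] at HLj
  have HRi := hv (v.symm i); rw [Equiv.apply_symm_apply] at HRi
  have HRj := hv (v.symm j); rw [Equiv.apply_symm_apply] at HRj
  have HBi := hw (w.symm i); rw [Equiv.apply_symm_apply] at HBi
  have HBj := hw (w.symm j); rw [Equiv.apply_symm_apply] at HBj
  have gdL : ∀ m : Fin n, S19.Good S19.pL (S19.σL f) (t m) := by
    intro m hp
    have hp' : 0 < ((t m).1.2 : ℕ) := hp
    rw [S19.σL, dif_pos hp']
    exact htri m _
  have gdR : ∀ m : Fin n, S19.Good S19.pR (S19.σR f) (t m) := by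
    intro m hp
    have hp' : ((t m).1.2 : ℕ) < ((t m).1.1 : ℕ) := by
      simp only [S19.pR_def] at hp; omega
    rw [S19.σR, dif_pos hp']
    exact htri m _
  have gdB : ∀ m : Fin n, S19.Good S19.pB (S19.σB f) (t m) := by
    intro m hp
    have hp' : ((t m).1.1 : ℕ) + 1 < n := by
      simp only [S19.pB_def] at hp; omega
    rw [S19.σB, dif_pos hp']
    exact htri m _
  have hT0L : ∀ x : UpT n, traceL f 0 x = x := fun _ => rfl
  have hT0R : ∀ x : UpT n, traceR f 0 x = x := fun _ => rfl
  have hT0B : ∀ x : UpT n, traceB f 0 x = x := fun _ => rfl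
  have EL := S19.main S19.pL S19.qL (S19.σL f) (traceL f) hT0L (S19.hTSL f)
      (S19.hstepL hf) (S19.hσinjL hf) S19.hpqL S19.hpnL (t i) (t j) (gdL i) (gdL j)
      (by simp only [S19.qL_def]; rw [HLj, HLi]; omega)
  have ER := S19.main S19.pR S19.qR (S19.σR f) (traceR f) hT0R (S19.hTSR f)
      (S19.hstepR hf) (S19.hσinjR hf) S19.hpqR S19.hpnR (t j) (t i) (gdR j) (gdR i)
      (by simp only [S19.qR_def]; rw [HRi, HRj]; omega)
  have EB := S19.main S19.pB S19.qB (S19.σB f) (traceB f) hT0B (S19.hTSB f)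
      (S19.hstepB hf) (S19.hσinjB hf) S19.hpqB S19.hpnB (t j) (t i) (gdB j) (gdB i)
      (by simp only [S19.qB_def]; rw [HBi, HBj]; omega)
  obtain ⟨EL1, EL2⟩ := EL
  obtain ⟨ER1, ER2⟩ := ER
  obtain ⟨EB1, EB2⟩ := EB
  simp only [S19.pL_def, S19.qL_def] at EL1 EL2
  simp only [S19.pR_def, S19.qR_def] at ER1 ER2
  simp only [S19.pB_def, S19.qB_def] at EB1 EB2
  have hci : ((t i).1.2 : ℕ) ≤ ((t i).1.1 : ℕ) := (t i).2
  have hcj : ((t j).1.2 : ℕ) ≤ ((t j).1.1 : ℕ) := (t j).2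
  have hri := (t i).1.1.isLt
  have hrj := (t j).1.1.isLt
  omega
end
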